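/- arXiv:2111.07842 — 12 statements merged into one kernel-verified Lean document; each statement's English description precedes it below -/
import Mathlib

section
/- The function f : ℝ → ℝ given by f(y) = 5y² + 20/y − 5/(2y⁴) (for y ≠ 0) does not have a local maximum at y = 1 and does not have a local minimum at y = 1. -/
lemma scal_aux (y : ℝ) (hy : 0 < y) :
    5 * y ^ 2 + 20 / y - 5 / (2 * y ^ 4) - 45 / 2
      = 5 * (y - 1) ^ 3 * (2 * y ^ 3 + 6 * y ^ 2 + 3 * y + 1) / (2 * y ^ 4) := by
  field_simp
  ring

/-- The function `f(y) = 5y² + 20/y − 5/(2y⁴)` has neither a local maximum nor a local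
minimum at `y = 1`. -/
theorem scal_E6_not_localMax_not_localMin (f : ℝ → ℝ)
    (hf : ∀ y : ℝ, f y = 5 * y ^ 2 + 20 / y - 5 / (2 * y ^ 4)) :
    ¬ IsLocalMax f 1 ∧ ¬ IsLocalMin f 1 := by
  have hf1 : f 1 = 45 / 2 := by rw [hf]; norm_num
  constructor
  · intro h
    obtain ⟨ε, hε, hball⟩ := Metric.eventually_nhds_iff.mp h
    set y : ℝ := 1 + min (ε / 2) (1 / 2) with hy
    have hm : 0 < min (ε / 2) (1 / 2) := by positivity
    have hy1 : 1 < y := by simp [hy]; linarith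
    have hy0 : 0 < y := by linarith
    have hd : dist y 1 < ε := by
      rw [Real.dist_eq]
      have : |y - 1| = min (ε / 2) (1 / 2) := by
        rw [hy]; rw [abs_of_pos] <;> [ring_nf; linarith]
      rw [this]
      calc min (ε / 2) (1 / 2) ≤ ε / 2 := min_le_left _ _
        _ < ε := by linarith
    have := hball hd
    rw [hf y, hf1] at this
    have hkey := scal_aux y hy0
    have hpos : 0 < 5 * (y - 1) ^ 3 * (2 * y ^ 3 + 6 * y ^ 2 + 3 * y + 1) / (2 * y ^ 4) := by
      apply div_pos
      · have h1 : 0 < (y - 1) ^ 3 := pow_pos (by linarith) 3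
        have h2 : (0:ℝ) < 2 * y ^ 3 + 6 * y ^ 2 + 3 * y + 1 := by positivity
        nlinarith [mul_pos h1 h2]
      · positivity
    linarith
  · intro h
    obtain ⟨ε, hε, hball⟩ := Metric.eventually_nhds_iff.mp h
    set y : ℝ := 1 - min (ε / 2) (1 / 2) with hy
    have hm : 0 < min (ε / 2) (1 / 2) := by positivity
    have hm2 : min (ε / 2) (1 / 2) ≤ 1 / 2 := min_le_right _ _
    have hy1 : y < 1 := by simp [hy]; linarith
    have hy0 : 0 < y := by rw [hy]; linarith
    have hd : dist y 1 < ε := by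
      rw [Real.dist_eq]
      have : |y - 1| = min (ε / 2) (1 / 2) := by
        rw [hy, abs_of_nonpos (by linarith)]; ring
      rw [this]
      calc min (ε / 2) (1 / 2) ≤ ε / 2 := min_le_left _ _
        _ < ε := by linarith
    have := hball hd
    rw [hf y, hf1] at this
    have hkey := scal_aux y hy0
    have hneg : 5 * (y - 1) ^ 3 * (2 * y ^ 3 + 6 * y ^ 2 + 3 * y + 1) / (2 * y ^ 4) < 0 := by
      apply div_neg_of_neg_of_pos
      · have h1 : (y - 1) ^ 3 < 0 := Odd.pow_neg (by decide) (by linarith)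
        have h2 : (0:ℝ) < 2 * y ^ 3 + 6 * y ^ 2 + 3 * y + 1 := by positivity
        nlinarith [mul_neg_of_neg_of_pos h1 h2]
      · positivity
    linarith
end

section
/- Let S : ℝ² → ℝ be defined on the open quadrant {x > 0, y > 0} by S(x,y) = 5/x + 20/y − 5x/(2y²), and let V = {(x,y) ∈ ℝ² : x > 0, y > 0, x²⁰y⁴⁰ = 1}. Then S does not have a local maximum on V at the point (1,1); that is, every neighborhood of (1,1) contains a point (x,y) ∈ V with S(x,y) > S(1,1). -/
/-- The scalar curvature `S(x,y) = 5/x + 20/y − 5x/(2y²)` on the unit-volume variety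
`V = {x > 0, y > 0, x²⁰y⁴⁰ = 1}` does not have a local maximum at `(1,1)`: every
neighborhood of `(1,1)` contains a point of `V` where `S` exceeds `S(1,1)`. -/
theorem scal_E6_not_localMaxOn
    (S : ℝ × ℝ → ℝ)
    (hS : ∀ p : ℝ × ℝ, S p = 5 / p.1 + 20 / p.2 - 5 * p.1 / (2 * p.2 ^ 2))
    (V : Set (ℝ × ℝ))
    (hV : V = {p : ℝ × ℝ | 0 < p.1 ∧ 0 < p.2 ∧ p.1 ^ 20 * p.2 ^ 40 = 1}) :
    ∀ U ∈ nhds ((1, 1) : ℝ × ℝ), ∃ p ∈ U, p ∈ V ∧ S (1, 1) < S p := by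
  intro U hU
  -- the curve s ↦ ((s²)⁻¹, s) lies in V and passes through (1,1) at s = 1
  have hc : ContinuousAt (fun s : ℝ => (((s ^ 2)⁻¹ : ℝ), s)) 1 := by
    apply ContinuousAt.prodMk
    · exact ((continuous_pow 2).continuousAt).inv₀ (by norm_num)
    · exact continuousAt_id
  have hpre : (fun s : ℝ => (((s ^ 2)⁻¹ : ℝ), s)) ⁻¹' U ∈ nhds (1 : ℝ) := by
    apply hc.preimage_mem_nhds
    norm_num
    exact hU
  obtain ⟨δ, hδ, hball⟩ := Metric.mem_nhds_iff.mp hpre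
  set s : ℝ := 1 + min δ 1 / 2 with hs_def
  have hmin : 0 < min δ 1 := lt_min hδ one_pos
  have hs1 : 1 < s := by simp [hs_def]; linarith [hmin]
  have hs0 : 0 < s := lt_trans one_pos hs1
  have hsball : s ∈ Metric.ball (1 : ℝ) δ := by
    have : |s - 1| = min δ 1 / 2 := by
      rw [hs_def]
      rw [show 1 + min δ 1 / 2 - 1 = min δ 1 / 2 by ring, abs_of_pos (by linarith [hmin])]
    simp [Metric.mem_ball, Real.dist_eq, this]
    calc min δ 1 / 2 < min δ 1 := by linarith
      _ ≤ δ := min_le_left _ _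
  refine ⟨(((s ^ 2)⁻¹ : ℝ), s), hball hsball, ?_, ?_⟩
  · rw [hV]
    refine ⟨by positivity, hs0, ?_⟩
    have hs0' : (s : ℝ) ≠ 0 := ne_of_gt hs0
    show ((s ^ 2)⁻¹) ^ 20 * s ^ 40 = 1
    field_simp
  · rw [hS, hS]
    simp only
    have hs0' : (s : ℝ) ≠ 0 := ne_of_gt hs0
    rw [show (5 / (1:ℝ) + 20 / 1 - 5 * 1 / (2 * 1 ^ 2)) = 45 / 2 by norm_num]
    rw [← sub_pos]
    have key : 5 / (s ^ 2)⁻¹ + 20 / s - 5 * (s ^ 2)⁻¹ / (2 * s ^ 2) - 45 / 2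
        = 5 * (s - 1) ^ 3 * (2 * s ^ 3 + 6 * s ^ 2 + 3 * s + 1) / (2 * s ^ 4) := by
      field_simp
      ring
    rw [key]
    have h1 : 0 < s - 1 := by linarith
    positivity
end

section
/- Fix an integer n ≥ 3 and let F : ℝ² → ℝ be defined on {x > 0, y > 0} by F(x,y) = (n² − 3n + 2)/(4x) + (n−1)/y − (n−2)x/(4y²) − (1/4) x^{1−(n−1)²} y^{−2n}. Then the kernel of the Hessian of F at the point (1,1) is one-dimensional, spanned by the vector (−2/(n−2), 1); that is, for v ∈ ℝ², the second Fréchet derivative of F at (1,1) satisfies D²F(1,1)(v,w) = 0 for all w ∈ ℝ² if and only if v is a scalar multiple of (−2/(n−2), 1). -/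
open ContinuousLinearMap

noncomputable def gradF (A B C a b : ℝ) (p : ℝ × ℝ) : (ℝ × ℝ) →L[ℝ] ℝ :=
  (-(A * (4 * p.1 ^ 2)⁻¹) - C * (4 * p.2 ^ 2)⁻¹ - a / 4 * p.1 ^ (a - 1) * p.2 ^ b) •
      (ContinuousLinearMap.fst ℝ ℝ ℝ)
    + (-(B * (p.2 ^ 2)⁻¹) + C * p.1 * (2 * p.2 ^ 3)⁻¹ - b / 4 * p.1 ^ a * p.2 ^ (b - 1)) •
      (ContinuousLinearMap.snd ℝ ℝ ℝ)

lemma hasFDerivAt_term (k a b : ℝ) (p : ℝ × ℝ) (hx0 : p.1 ≠ 0) (hy0 : p.2 ≠ 0) :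
    HasFDerivAt (fun q : ℝ × ℝ => k * q.1 ^ a * q.2 ^ b)
      ((k * p.1 ^ a) • ((b * p.2 ^ (b - 1)) • (ContinuousLinearMap.snd ℝ ℝ ℝ))
        + (p.2 ^ b) • ((k * (a * p.1 ^ (a - 1))) • (ContinuousLinearMap.fst ℝ ℝ ℝ))) p := by
  have hfa : HasFDerivAt (fun q : ℝ × ℝ => k * q.1 ^ a)
      ((k * (a * p.1 ^ (a - 1))) • (ContinuousLinearMap.fst ℝ ℝ ℝ)) p :=
    ((Real.hasDerivAt_rpow_const (p := a) (Or.inl hx0)).const_mul k).comp_hasFDerivAt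
      p hasFDerivAt_fst
  have hfb : HasFDerivAt (fun q : ℝ × ℝ => q.2 ^ b)
      ((b * p.2 ^ (b - 1)) • (ContinuousLinearMap.snd ℝ ℝ ℝ)) p :=
    (Real.hasDerivAt_rpow_const (p := b) (Or.inl hy0)).comp_hasFDerivAt p hasFDerivAt_snd
  exact hfa.mul hfb

lemma hasFDerivAt_F (A B C a b : ℝ) (p : ℝ × ℝ) (hx : 0 < p.1) (hy : 0 < p.2) :
    HasFDerivAt
      (fun p : ℝ × ℝ =>
        A * (4 * p.1)⁻¹ + B * p.2⁻¹ - C * p.1 * (4 * p.2 ^ 2)⁻¹ - 1 / 4 * p.1 ^ a * p.2 ^ b)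
      (gradF A B C a b p) p := by
  have hx0 : p.1 ≠ 0 := hx.ne'
  have hy0 : p.2 ≠ 0 := hy.ne'
  have h1 : HasFDerivAt (fun q : ℝ × ℝ => A * (4 * q.1)⁻¹)
      ((A * (-4 / (4 * p.1) ^ 2)) • (ContinuousLinearMap.fst ℝ ℝ ℝ)) p := by
    have : HasDerivAt (fun x : ℝ => A * (4 * x)⁻¹) (A * (-4 / (4 * p.1) ^ 2)) p.1 := by
      have h := (((hasDerivAt_id p.1).const_mul (4:ℝ)).inv (by simpa using hx0)).const_mul A
      simpa using h
    exact this.comp_hasFDerivAt p hasFDerivAt_fst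
  have h2 : HasFDerivAt (fun q : ℝ × ℝ => B * q.2⁻¹)
      ((B * (-(p.2 ^ 2)⁻¹)) • (ContinuousLinearMap.snd ℝ ℝ ℝ)) p := by
    exact ((hasDerivAt_inv hy0).const_mul B).comp_hasFDerivAt p hasFDerivAt_snd
  have hd3 : HasDerivAt (fun y : ℝ => (4 * y ^ 2)⁻¹)
      (-(4 * (2 * p.2)) / (4 * p.2 ^ 2) ^ 2) p.2 := by
    have h := (((hasDerivAt_pow 2 p.2).const_mul (4:ℝ)).inv (by positivity))
    exact h.congr_deriv (by norm_num)
  have h3 : HasFDerivAt (fun q : ℝ × ℝ => C * q.1 * (4 * q.2 ^ 2)⁻¹)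
      ((C * p.1) • ((-(4 * (2 * p.2)) / (4 * p.2 ^ 2) ^ 2) • (ContinuousLinearMap.snd ℝ ℝ ℝ))
        + ((4 * p.2 ^ 2)⁻¹) • (C • (ContinuousLinearMap.fst ℝ ℝ ℝ))) p := by
    exact (hasFDerivAt_fst.const_mul C).mul (hd3.comp_hasFDerivAt p hasFDerivAt_snd)
  have h4 := hasFDerivAt_term (1/4) a b p hx0 hy0
  have h := ((h1.add h2).sub h3).sub h4
  refine h.congr_fderiv ?_
  refine ContinuousLinearMap.ext fun w => ?_
  simp only [gradF, ContinuousLinearMap.add_apply, ContinuousLinearMap.sub_apply,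
    ContinuousLinearMap.smul_apply, ContinuousLinearMap.coe_fst', ContinuousLinearMap.coe_snd',
    smul_eq_mul]
  field_simp
  ring

lemma hasFDerivAt_Fx (A C a b : ℝ) :
    HasFDerivAt
      (fun p : ℝ × ℝ =>
        -(A * (4 * p.1 ^ 2)⁻¹) - C * (4 * p.2 ^ 2)⁻¹ - a / 4 * p.1 ^ (a - 1) * p.2 ^ b)
      ((A / 2 - a * (a - 1) / 4) • (ContinuousLinearMap.fst ℝ ℝ ℝ)
        + (C / 2 - a * b / 4) • (ContinuousLinearMap.snd ℝ ℝ ℝ)) ((1, 1) : ℝ × ℝ) := by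
  have hd1 : HasDerivAt (fun x : ℝ => -(A * (4 * x ^ 2)⁻¹))
      (-(A * (-(4 * (2 * (1:ℝ))) / (4 * (1:ℝ) ^ 2) ^ 2))) 1 := by
    have h := ((((hasDerivAt_pow 2 (1:ℝ)).const_mul (4:ℝ)).inv (by norm_num)).const_mul A).neg
    exact h.congr_deriv (by norm_num)
  have h1 : HasFDerivAt (fun q : ℝ × ℝ => -(A * (4 * q.1 ^ 2)⁻¹))
      ((-(A * (-(4 * (2 * (1:ℝ))) / (4 * (1:ℝ) ^ 2) ^ 2))) • (ContinuousLinearMap.fst ℝ ℝ ℝ))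
      ((1,1) : ℝ × ℝ) := hd1.comp_hasFDerivAt (f := Prod.fst) ((1,1) : ℝ × ℝ) hasFDerivAt_fst
  have hd2 : HasDerivAt (fun y : ℝ => C * (4 * y ^ 2)⁻¹)
      (C * (-(4 * (2 * (1:ℝ))) / (4 * (1:ℝ) ^ 2) ^ 2)) 1 := by
    have h := (((hasDerivAt_pow 2 (1:ℝ)).const_mul (4:ℝ)).inv (by norm_num)).const_mul C
    simpa using h
  have h2 : HasFDerivAt (fun q : ℝ × ℝ => C * (4 * q.2 ^ 2)⁻¹)
      ((C * (-(4 * (2 * (1:ℝ))) / (4 * (1:ℝ) ^ 2) ^ 2)) • (ContinuousLinearMap.snd ℝ ℝ ℝ))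
      ((1,1) : ℝ × ℝ) := hd2.comp_hasFDerivAt (f := Prod.snd) ((1,1) : ℝ × ℝ) hasFDerivAt_snd
  have h3 := hasFDerivAt_term (a / 4) (a - 1) b ((1,1) : ℝ × ℝ) (by norm_num) (by norm_num)
  have h := (h1.sub h2).sub h3
  refine h.congr_fderiv ?_
  refine ContinuousLinearMap.ext fun w => ?_
  simp only [ContinuousLinearMap.add_apply, ContinuousLinearMap.sub_apply,
    ContinuousLinearMap.smul_apply, ContinuousLinearMap.coe_fst', ContinuousLinearMap.coe_snd',
    smul_eq_mul, Real.one_rpow]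
  norm_num
  ring

lemma hasFDerivAt_Fy (B C a b : ℝ) :
    HasFDerivAt
      (fun p : ℝ × ℝ =>
        -(B * (p.2 ^ 2)⁻¹) + C * p.1 * (2 * p.2 ^ 3)⁻¹ - b / 4 * p.1 ^ a * p.2 ^ (b - 1))
      ((C / 2 - a * b / 4) • (ContinuousLinearMap.fst ℝ ℝ ℝ)
        + (2 * B - 3 * C / 2 - b * (b - 1) / 4) • (ContinuousLinearMap.snd ℝ ℝ ℝ))
      ((1, 1) : ℝ × ℝ) := by
  have hd1 : HasDerivAt (fun y : ℝ => -(B * (y ^ 2)⁻¹))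
      (-(B * (-(2 * (1:ℝ)) / ((1:ℝ) ^ 2) ^ 2))) 1 := by
    have h := (((hasDerivAt_pow 2 (1:ℝ)).inv (by norm_num)).const_mul B).neg
    exact h.congr_deriv (by norm_num)
  have h1 : HasFDerivAt (fun q : ℝ × ℝ => -(B * (q.2 ^ 2)⁻¹))
      ((-(B * (-(2 * (1:ℝ)) / ((1:ℝ) ^ 2) ^ 2))) • (ContinuousLinearMap.snd ℝ ℝ ℝ))
      ((1,1) : ℝ × ℝ) := hd1.comp_hasFDerivAt (f := Prod.snd) ((1,1) : ℝ × ℝ) hasFDerivAt_snd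
  have hd2 : HasDerivAt (fun y : ℝ => (2 * y ^ 3)⁻¹)
      (-(2 * (3 * (1:ℝ) ^ 2)) / (2 * (1:ℝ) ^ 3) ^ 2) 1 := by
    have h := ((hasDerivAt_pow 3 (1:ℝ)).const_mul (2:ℝ)).inv (by norm_num)
    exact h.congr_deriv (by norm_num)
  have h2 : HasFDerivAt (fun q : ℝ × ℝ => C * q.1 * (2 * q.2 ^ 3)⁻¹)
      ((C * (1:ℝ)) • ((-(2 * (3 * (1:ℝ) ^ 2)) / (2 * (1:ℝ) ^ 3) ^ 2) •
          (ContinuousLinearMap.snd ℝ ℝ ℝ))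
        + ((2 * (1:ℝ) ^ 3)⁻¹) • (C • (ContinuousLinearMap.fst ℝ ℝ ℝ))) ((1,1) : ℝ × ℝ) :=
    (hasFDerivAt_fst.const_mul C).mul (hd2.comp_hasFDerivAt (f := Prod.snd) ((1,1) : ℝ × ℝ) hasFDerivAt_snd)
  have h3 := hasFDerivAt_term (b / 4) a (b - 1) ((1,1) : ℝ × ℝ) (by norm_num) (by norm_num)
  have h := (h1.add h2).sub h3
  refine h.congr_fderiv ?_
  refine ContinuousLinearMap.ext fun w => ?_
  simp only [ContinuousLinearMap.add_apply, ContinuousLinearMap.sub_apply,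
    ContinuousLinearMap.smul_apply, ContinuousLinearMap.coe_fst', ContinuousLinearMap.coe_snd',
    smul_eq_mul, Real.one_rpow]
  norm_num
  ring

lemma hasFDerivAt_gradF (A B C a b : ℝ) :
    HasFDerivAt (gradF A B C a b)
      (((A / 2 - a * (a - 1) / 4) • (ContinuousLinearMap.fst ℝ ℝ ℝ)
          + (C / 2 - a * b / 4) • (ContinuousLinearMap.snd ℝ ℝ ℝ)).smulRight
          (ContinuousLinearMap.fst ℝ ℝ ℝ)
        + ((C / 2 - a * b / 4) • (ContinuousLinearMap.fst ℝ ℝ ℝ)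
          + (2 * B - 3 * C / 2 - b * (b - 1) / 4) • (ContinuousLinearMap.snd ℝ ℝ ℝ)).smulRight
          (ContinuousLinearMap.snd ℝ ℝ ℝ)) ((1, 1) : ℝ × ℝ) := by
  have h1 := (hasFDerivAt_Fx A C a b).smul
    (hasFDerivAt_const (ContinuousLinearMap.fst ℝ ℝ ℝ) ((1,1) : ℝ × ℝ))
  have h2 := (hasFDerivAt_Fy B C a b).smul
    (hasFDerivAt_const (ContinuousLinearMap.snd ℝ ℝ ℝ) ((1,1) : ℝ × ℝ))
  have h := h1.add h2
  simp only [smul_zero, zero_add, add_zero, smul_eq_mul] at h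
  exact h


/-- The kernel of the Hessian at `(1,1)` of the scalar curvature
`F(x,y) = (n²−3n+2)/(4x) + (n−1)/y − (n−2)x/(4y²) − (1/4)x^{1−(n−1)²}y^{−2n}`
of unit-volume `SU(n−1)`-invariant metrics on `SU(n)` is one-dimensional, spanned by
`(−2/(n−2), 1)`. -/
theorem hessian_kernel_SUn (n : ℕ) (hn : 3 ≤ n) (F : ℝ × ℝ → ℝ)
    (hF : ∀ p : ℝ × ℝ, F p =
      ((n : ℝ) ^ 2 - 3 * (n : ℝ) + 2) / (4 * p.1) + ((n : ℝ) - 1) / p.2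
        - ((n : ℝ) - 2) * p.1 / (4 * p.2 ^ 2)
        - (1 / 4) * p.1 ^ (1 - ((n : ℝ) - 1) ^ 2) * p.2 ^ (-(2 * (n : ℝ)))) :
    ∀ v : ℝ × ℝ,
      (∀ w : ℝ × ℝ, fderiv ℝ (fderiv ℝ F) (1, 1) v w = 0) ↔
        ∃ c : ℝ, v = c • ((-2 / ((n : ℝ) - 2), 1) : ℝ × ℝ) := by
  set N : ℝ := (n : ℝ) with hN
  have hN3 : (3 : ℝ) ≤ N := by rw [hN]; exact_mod_cast hn
  set A : ℝ := N ^ 2 - 3 * N + 2 with hA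
  set B : ℝ := N - 1 with hB
  set C : ℝ := N - 2 with hC
  set a : ℝ := 1 - (N - 1) ^ 2 with ha
  set b : ℝ := -(2 * N) with hb
  have hF2 : F = fun p : ℝ × ℝ =>
      A * (4 * p.1)⁻¹ + B * p.2⁻¹ - C * p.1 * (4 * p.2 ^ 2)⁻¹ - 1 / 4 * p.1 ^ a * p.2 ^ b := by
    funext p
    rw [hF p]
    ring
  subst hF2
  set Hxx : ℝ := A / 2 - a * (a - 1) / 4 with hHxx
  set Hxy : ℝ := C / 2 - a * b / 4 with hHxy
  set Hyy : ℝ := 2 * B - 3 * C / 2 - b * (b - 1) / 4 with hHyy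
  have hev : fderiv ℝ
      (fun p : ℝ × ℝ =>
        A * (4 * p.1)⁻¹ + B * p.2⁻¹ - C * p.1 * (4 * p.2 ^ 2)⁻¹ - 1 / 4 * p.1 ^ a * p.2 ^ b)
      =ᶠ[nhds ((1, 1) : ℝ × ℝ)] gradF A B C a b := by
    have hs : {p : ℝ × ℝ | 0 < p.1 ∧ 0 < p.2} ∈ nhds ((1, 1) : ℝ × ℝ) := by
      refine IsOpen.mem_nhds ?_ ⟨one_pos, one_pos⟩
      exact (isOpen_lt continuous_const continuous_fst).inter
        (isOpen_lt continuous_const continuous_snd)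
    filter_upwards [hs] with p hp using (hasFDerivAt_F A B C a b p hp.1 hp.2).fderiv
  have hkey : fderiv ℝ (fderiv ℝ
      (fun p : ℝ × ℝ =>
        A * (4 * p.1)⁻¹ + B * p.2⁻¹ - C * p.1 * (4 * p.2 ^ 2)⁻¹ - 1 / 4 * p.1 ^ a * p.2 ^ b))
      ((1, 1) : ℝ × ℝ)
      = ((Hxx • (ContinuousLinearMap.fst ℝ ℝ ℝ)
          + Hxy • (ContinuousLinearMap.snd ℝ ℝ ℝ)).smulRight (ContinuousLinearMap.fst ℝ ℝ ℝ)
        + (Hxy • (ContinuousLinearMap.fst ℝ ℝ ℝ)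
          + Hyy • (ContinuousLinearMap.snd ℝ ℝ ℝ)).smulRight (ContinuousLinearMap.snd ℝ ℝ ℝ)) := by
    rw [hev.fderiv_eq]
    exact (hasFDerivAt_gradF A B C a b).fderiv
  intro v
  have heval : ∀ w : ℝ × ℝ, fderiv ℝ (fderiv ℝ
      (fun p : ℝ × ℝ =>
        A * (4 * p.1)⁻¹ + B * p.2⁻¹ - C * p.1 * (4 * p.2 ^ 2)⁻¹ - 1 / 4 * p.1 ^ a * p.2 ^ b))
      ((1, 1) : ℝ × ℝ) v w
      = (Hxx * v.1 + Hxy * v.2) * w.1 + (Hxy * v.1 + Hyy * v.2) * w.2 := by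
    intro w
    rw [hkey]
    simp [ContinuousLinearMap.smulRight_apply, smul_eq_mul]
  have hCne : C ≠ 0 := by rw [hC]; exact ne_of_gt (by linarith)
  have hN21 : N ^ 2 - 1 ≠ 0 := ne_of_gt (by nlinarith)
  constructor
  · intro h
    have e2 := h (0, 1)
    rw [heval] at e2
    simp at e2
    refine ⟨v.2, ?_⟩
    have e2'' : (N ^ 2 - 1) * ((N - 2) * v.1 + 2 * v.2) = 0 := by
      simp only [hHxx, hHxy, hHyy, hA, hB, hC, ha, hb] at e2
      linear_combination (-2 : ℝ) * e2
    have e2' : (N - 2) * v.1 + 2 * v.2 = 0 :=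
      (mul_eq_zero.mp e2'').resolve_left hN21
    have hNe : N - 2 ≠ 0 := ne_of_gt (by linarith)
    have hv1 : v.1 = v.2 * (-2 / (N - 2)) := by
      field_simp
      linarith [e2']
    exact Prod.ext hv1 (by simp)
  · rintro ⟨c, rfl⟩ w
    rw [heval]
    simp only [Prod.smul_fst, Prod.smul_snd, smul_eq_mul, mul_one]
    have hNe : N - 2 ≠ 0 := ne_of_gt (by linarith)
    have hb1 : Hxx * (-2 / (N - 2)) + Hxy = 0 := by
      simp only [hHxx, hHxy, hA, hB, hC, ha, hb]
      field_simp
      ring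
    have hb2 : Hxy * (-2 / (N - 2)) + Hyy = 0 := by
      simp only [hHxx, hHxy, hHyy, hA, hB, hC, ha, hb]
      field_simp
      ring
    linear_combination (c * w.1) * hb1 + (c * w.2) * hb2
end

section
/- Fix an integer n ≥ 3, let x(y) = −(2/(n−2))y + n/(n−2), and define f(y) = (n² − 3n + 2)/(4 x(y)) + (n−1)/y − (n−2)x(y)/(4y²) − (1/4) x(y)^{−n(n−2)} y^{−2n} for 0 < y < n/2. Then f'(1) = 0, f''(1) = 0, and f'''(1) = n²(n−1)/(n−2)², which is nonzero. -/
/-- First derivative of the scalar curvature along the curve. -/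
noncomputable def SUnF1 (a : ℝ) (x : ℝ → ℝ) (y : ℝ) : ℝ :=
  (a^2 - 3*a + 2)/4 * (2/(a-2)) / (x y)^2 - (a-1)/y^2
    + (a-2)/4 * ((2/(a-2))*y + 2*x y) / y^3
    - 1/4 * ((x y) ^ (-(a*(a-2))) * y ^ (-(2*a))) * (2*a/(x y) - 2*a/y)

/-- Second derivative of the scalar curvature along the curve. -/
noncomputable def SUnF2 (a : ℝ) (x : ℝ → ℝ) (y : ℝ) : ℝ :=
  2*((a^2 - 3*a + 2)/4)*(2/(a-2))^2/(x y)^3 + 2*(a-1)/y^3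
    - (a-2)/4 * (4*(2/(a-2))*y + 6*x y) / y^4
    + ((x y) ^ (-(a*(a-2))) * y ^ (-(2*a))) *
        (-(2*a/(x y) - 2*a/y)^2/4 - (2*a*(2/(a-2))/(x y)^2 + 2*a/y^2)/4)

set_option maxHeartbeats 1600000 in
theorem scal_SUn_curve_inflection_aux (a : ℝ) (ha : 3 ≤ a) (x f : ℝ → ℝ)
    (hx : ∀ y : ℝ, x y = -(2/(a-2)) * y + a/(a-2))
    (hf : ∀ y : ℝ, f y = (a^2 - 3*a + 2)/(4*x y) + (a-1)/y - (a-2)*x y/(4*y^2)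
      - 1/4 * (x y) ^ (-(a*(a-2))) * y ^ (-(2*a))) :
    deriv f 1 = 0 ∧ iteratedDeriv 2 f 1 = 0 ∧
      iteratedDeriv 3 f 1 = a^2 * (a-1) / (a-2)^2 ∧ a^2 * (a-1) / (a-2)^2 ≠ 0 := by
  have ha2 : (0:ℝ) < a - 2 := by linarith
  have h1U : (1:ℝ) ∈ Set.Ioo (0:ℝ) (a/2) := ⟨one_pos, by linarith⟩
  have hxpos : ∀ y ∈ Set.Ioo (0:ℝ) (a/2), 0 < x y := by
    intro y hy
    rw [hx y]
    have h1 : 0 < a - 2*y := by nlinarith [hy.2]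
    have h2 : -(2/(a-2)) * y + a/(a-2) = (a - 2*y)/(a-2) := by field_simp; ring
    rw [h2]; exact div_pos h1 ha2
  have hx1 : x 1 = 1 := by rw [hx 1]; field_simp; ring
  have hx' : ∀ y : ℝ, HasDerivAt x (-(2/(a-2))) y := by
    intro y
    have hxe : x = fun y => -(2/(a-2)) * y + a/(a-2) := funext hx
    rw [hxe]
    simpa using ((hasDerivAt_id y).const_mul (-(2/(a-2)))).add_const (a/(a-2))
  have key1 : ∀ y ∈ Set.Ioo (0:ℝ) (a/2), HasDerivAt f (SUnF1 a x y) y := by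
    intro y hy
    have hy0 : 0 < y := hy.1
    have hxy : 0 < x y := hxpos y hy
    have hfe : f = fun y => (a^2 - 3*a + 2)/(4*x y) + (a-1)/y - (a-2)*x y/(4*y^2)
        - 1/4 * ((x y) ^ (-(a*(a-2))) * y ^ (-(2*a))) := by
      funext z; rw [hf z, mul_assoc]
    rw [hfe]
    have T1 := (hasDerivAt_const y (a^2 - 3*a + 2)).div ((hx' y).const_mul 4)
      (by positivity : (4:ℝ) * x y ≠ 0)
    have T2 := (hasDerivAt_const y (a-1)).div (hasDerivAt_id y) hy0.ne'
    have T3 := ((hx' y).const_mul (a-2)).div ((hasDerivAt_pow 2 y).const_mul 4)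
      (by positivity : (4:ℝ) * y^2 ≠ 0)
    have d1 := (hx' y).rpow_const (p := -(a*(a-2))) (Or.inl hxy.ne')
    have d2 := (hasDerivAt_id y).rpow_const (p := -(2*a)) (Or.inl hy0.ne')
    have T4 := (d1.mul d2).const_mul (1/4 : ℝ)
    convert ((T1.add T2).sub T3).sub T4 using 1
    · rfl
    · rfl
    · rfl
    simp only [SUnF1, id_eq]
    rw [Real.rpow_sub_one hxy.ne', Real.rpow_sub_one hy0.ne']
    field_simp
    ring
  have key2 : ∀ y ∈ Set.Ioo (0:ℝ) (a/2), HasDerivAt (SUnF1 a x) (SUnF2 a x y) y := by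
    intro y hy
    have hy0 : 0 < y := hy.1
    have hxy : 0 < x y := hxpos y hy
    have U1 := (hasDerivAt_const y ((a^2 - 3*a + 2)/4 * (2/(a-2)))).div ((hx' y).pow 2)
      (by positivity : (x y)^2 ≠ 0)
    have U2 := (hasDerivAt_const y (a-1)).div (hasDerivAt_pow 2 y)
      (by positivity : y^2 ≠ 0)
    have U3 := ((((hasDerivAt_id y).const_mul (2/(a-2))).add ((hx' y).const_mul 2)).const_mul
        ((a-2)/4)).div (hasDerivAt_pow 3 y) (by positivity : y^3 ≠ 0)
    have d1 := (hx' y).rpow_const (p := -(a*(a-2))) (Or.inl hxy.ne')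
    have d2 := (hasDerivAt_id y).rpow_const (p := -(2*a)) (Or.inl hy0.ne')
    have dS := ((hasDerivAt_const y (2*a)).div (hx' y) hxy.ne').sub
      ((hasDerivAt_const y (2*a)).div (hasDerivAt_id y) hy0.ne')
    have U4 := ((d1.mul d2).const_mul (1/4 : ℝ)).mul dS
    have : HasDerivAt (SUnF1 a x) _ y := ((U1.sub U2).add U3).sub U4
    convert this using 1
    simp only [SUnF2, id_eq, Pi.add_apply, Pi.sub_apply, Pi.mul_apply, Pi.div_apply, Pi.pow_apply, Pi.neg_apply]
    rw [Real.rpow_sub_one hxy.ne', Real.rpow_sub_one hy0.ne']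
    field_simp
    ring
  have key3 : HasDerivAt (SUnF2 a x) (a^2 * (a-1) / (a-2)^2) 1 := by
    have hy0 : (0:ℝ) < 1 := one_pos
    have hxy : 0 < x 1 := hxpos 1 h1U
    have V1 := (hasDerivAt_const (1:ℝ) (2*((a^2 - 3*a + 2)/4)*(2/(a-2))^2)).div
      ((hx' 1).pow 3) (by positivity : (x 1)^3 ≠ 0)
    have V2 := (hasDerivAt_const (1:ℝ) (2*(a-1))).div (hasDerivAt_pow 3 1)
      (by positivity : (1:ℝ)^3 ≠ 0)
    have V3 := ((((hasDerivAt_id (1:ℝ)).const_mul (4*(2/(a-2)))).add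
        ((hx' 1).const_mul 6)).const_mul ((a-2)/4)).div (hasDerivAt_pow 4 1)
      (by positivity : (1:ℝ)^4 ≠ 0)
    have d1 := (hx' 1).rpow_const (p := -(a*(a-2))) (Or.inl hxy.ne')
    have d2 := (hasDerivAt_id (1:ℝ)).rpow_const (p := -(2*a)) (Or.inl hy0.ne')
    have dS := ((hasDerivAt_const (1:ℝ) (2*a)).div (hx' 1) hxy.ne').sub
      ((hasDerivAt_const (1:ℝ) (2*a)).div (hasDerivAt_id 1) hy0.ne')
    have dW1 := ((dS.pow 2).neg).div_const (4:ℝ)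
    have dW2 := (((hasDerivAt_const (1:ℝ) (2*a*(2/(a-2)))).div ((hx' 1).pow 2)
        (by positivity : (x 1)^2 ≠ 0)).add
      ((hasDerivAt_const (1:ℝ) (2*a)).div (hasDerivAt_pow 2 1)
        (by positivity : (1:ℝ)^2 ≠ 0))).div_const (4:ℝ)
    have V4 := (d1.mul d2).mul (dW1.sub dW2)
    have : HasDerivAt (SUnF2 a x) _ 1 := ((V1.add V2).sub V3).add V4
    convert this using 1
    simp only [id_eq, Pi.add_apply, Pi.sub_apply, Pi.mul_apply, Pi.div_apply, Pi.pow_apply, Pi.neg_apply]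
    rw [hx1]
    simp only [Real.one_rpow, one_pow]
    field_simp
    ring
  have hd1 : ∀ y ∈ Set.Ioo (0:ℝ) (a/2), deriv f y = SUnF1 a x y :=
    fun y hy => (key1 y hy).deriv
  have e1 : deriv f 1 = SUnF1 a x 1 := hd1 1 h1U
  have F1at1 : SUnF1 a x 1 = 0 := by
    simp only [SUnF1]
    rw [hx1]
    simp only [Real.one_rpow, one_pow]
    field_simp
    ring
  have F2at1 : SUnF2 a x 1 = 0 := by
    simp only [SUnF2]
    rw [hx1]
    simp only [Real.one_rpow, one_pow]
    field_simp
    ring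
  have hev1 : deriv f =ᶠ[nhds 1] SUnF1 a x := by
    filter_upwards [isOpen_Ioo.mem_nhds h1U] with z hz using hd1 z hz
  have hd2 : ∀ y ∈ Set.Ioo (0:ℝ) (a/2), deriv (deriv f) y = SUnF2 a x y := by
    intro y hy
    have hev : deriv f =ᶠ[nhds y] SUnF1 a x := by
      filter_upwards [isOpen_Ioo.mem_nhds hy] with z hz using hd1 z hz
    rw [hev.deriv_eq, (key2 y hy).deriv]
  have hev2 : deriv (deriv f) =ᶠ[nhds 1] SUnF2 a x := by
    filter_upwards [isOpen_Ioo.mem_nhds h1U] with z hz using hd2 z hz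
  refine ⟨by rw [e1, F1at1], ?_, ?_, ?_⟩
  · rw [iteratedDeriv_succ, iteratedDeriv_one, hev1.deriv_eq, (key2 1 h1U).deriv, F2at1]
  · rw [iteratedDeriv_succ, iteratedDeriv_succ, iteratedDeriv_one, hev2.deriv_eq, key3.deriv]
  · have h1 : 0 < a^2 * (a-1) := by nlinarith
    have h2 : 0 < (a-2)^2 := by positivity
    exact ne_of_gt (div_pos h1 h2)

/-- Along the curve of unit-volume `SU(n−1)`-invariant metrics on `SU(n)` given by
`x(y) = −(2/(n−2))y + n/(n−2)`, the scalar curvature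
`f(y) = (n²−3n+2)/(4x(y)) + (n−1)/y − (n−2)x(y)/(4y²) − (1/4)x(y)^{−n(n−2)}y^{−2n}`
satisfies `f'(1) = 0`, `f''(1) = 0` and `f'''(1) = n²(n−1)/(n−2)² ≠ 0`. -/
theorem scal_SUn_curve_inflection (n : ℕ) (hn : 3 ≤ n) (x f : ℝ → ℝ)
    (hx : ∀ y : ℝ, x y = -(2 / ((n : ℝ) - 2)) * y + (n : ℝ) / ((n : ℝ) - 2))
    (hf : ∀ y : ℝ, f y =
      ((n : ℝ) ^ 2 - 3 * (n : ℝ) + 2) / (4 * x y) + ((n : ℝ) - 1) / y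
        - ((n : ℝ) - 2) * x y / (4 * y ^ 2)
        - (1 / 4) * (x y) ^ (-((n : ℝ) * ((n : ℝ) - 2))) * y ^ (-(2 * (n : ℝ)))) :
    deriv f 1 = 0 ∧ iteratedDeriv 2 f 1 = 0 ∧
      iteratedDeriv 3 f 1 = (n : ℝ) ^ 2 * ((n : ℝ) - 1) / ((n : ℝ) - 2) ^ 2 ∧
      (n : ℝ) ^ 2 * ((n : ℝ) - 1) / ((n : ℝ) - 2) ^ 2 ≠ 0 := by
  exact scal_SUn_curve_inflection_aux (n : ℝ) (by exact_mod_cast hn) x f hx hf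
end

section
/- Fix an integer n ≥ 3, let x(y) = −(2/(n−2))y + n/(n−2), and define f(y) = (n² − 3n + 2)/(4 x(y)) + (n−1)/y − (n−2)x(y)/(4y²) − (1/4) x(y)^{−n(n−2)} y^{−2n} for 0 < y < n/2. Then f does not have a local maximum at y = 1 and does not have a local minimum at y = 1. -/
set_option maxHeartbeats 1600000 in
private theorem scal_aux_s9 (N : ℝ) (hN3 : (3:ℝ) ≤ N) (x f : ℝ → ℝ)
    (hx : ∀ y : ℝ, x y = -(2 / (N - 2)) * y + N / (N - 2))
    (hf : ∀ y : ℝ, f y =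
      (N ^ 2 - 3 * N + 2) / (4 * x y) + (N - 1) / y
        - (N - 2) * x y / (4 * y ^ 2)
        - (1 / 4) * (x y) ^ (-(N * (N - 2))) * y ^ (-(2 * N))) :
    ¬ IsLocalMax f 1 ∧ ¬ IsLocalMin f 1 := by
  have hm0 : N - 2 ≠ 0 := by linarith
  have hfE : f = fun y => (N ^ 2 - 3 * N + 2) / (4 * x y) + (N - 1) / y
        - (N - 2) * x y / (4 * y ^ 2)
        - (1 / 4) * (x y) ^ (-(N * (N - 2))) * y ^ (-(2 * N)) := funext hf
  have hdx : ∀ z : ℝ, HasDerivAt x (-(2 / (N - 2))) z := by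
    intro z
    have h : HasDerivAt (fun z : ℝ => -(2 / (N - 2)) * z + N / (N - 2))
        (-(2/(N-2)) * 1) z := ((hasDerivAt_id z).const_mul _).add_const _
    rw [mul_one] at h
    exact (funext hx : x = _) ▸ h
  have hx1 : x 1 = 1 := by rw [hx]; field_simp; ring
  set G : ℝ → ℝ := fun y =>
      N^2 * ((N-5)*y^2 + (N+3)*y - N) / (2*(N-2)^2 * (x y)^2 * y^3)
        - N^2 * (x y ^ (-(N * (N - 2))) * y ^ (-(2 * N))) / (2*(N-2)*(x y)*y) with hG
  -- Step 1: derivative of f on the interval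
  have key : ∀ y ∈ Set.Ioo (1/2:ℝ) (3/2), HasDerivAt f ((y - 1) * G y) y := by
    rintro y ⟨hy1, hy2⟩
    have hy0 : (0:ℝ) < y := by linarith
    have hxeq : x y = (N - 2*y)/(N-2) := by rw [hx]; field_simp; ring
    have hxpos : 0 < x y := by
      rw [hxeq]; exact div_pos (by linarith) (by linarith)
    have hGy : G y = N^2 * ((N-5)*y^2 + (N+3)*y - N) / (2*(N-2)^2 * (x y)^2 * y^3)
        - N^2 * (x y ^ (-(N * (N - 2))) * y ^ (-(2 * N))) / (2*(N-2)*(x y)*y) := by rw [hG]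
    rw [hGy, hfE]
    have hXd : HasDerivAt (fun z => x z ^ (-(N * (N - 2))))
        (-(2/(N-2)) * (-(N * (N - 2))) * x y ^ (-(N * (N - 2)) - 1)) y :=
      (hdx y).rpow_const (Or.inl hxpos.ne')
    have hYd : HasDerivAt (fun z : ℝ => z ^ (-(2 * N))) ((-(2*N)) * y ^ (-(2*N) - 1)) y :=
      Real.hasDerivAt_rpow_const (Or.inl hy0.ne')
    have h1 : HasDerivAt (fun z => (N ^ 2 - 3 * N + 2) / (4 * x z))
        ((0 * (4 * x y) - (N ^ 2 - 3 * N + 2) * (4 * -(2/(N-2)))) / (4 * x y)^2) y :=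
      (hasDerivAt_const y _).div ((hdx y).const_mul 4) (by positivity)
    have h2 : HasDerivAt (fun z : ℝ => (N - 1) / z) ((0 * y - (N-1) * 1) / y^2) y :=
      (hasDerivAt_const y _).div (hasDerivAt_id y) hy0.ne'
    have h3 : HasDerivAt (fun z => (N - 2) * x z / (4 * z ^ 2))
        (((N-2) * -(2/(N-2)) * (4*y^2) - (N - 2) * x y * (4 * (↑(2:ℕ) * y ^ (2-1)))) / (4*y^2)^2) y :=
      ((hdx y).const_mul (N-2)).div ((hasDerivAt_pow 2 y).const_mul 4) (by positivity)
    have h4 : HasDerivAt (fun z => 1 / 4 * x z ^ (-(N * (N - 2))) * z ^ (-(2 * N)))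
        ((1/4 * (-(2/(N-2)) * (-(N * (N - 2))) * x y ^ (-(N * (N - 2)) - 1))) * y ^ (-(2 * N))
          + (1/4 * x y ^ (-(N * (N - 2)))) * ((-(2*N)) * y ^ (-(2*N) - 1))) y :=
      (hXd.const_mul (1/4)).mul hYd
    have hD := ((h1.add h2).sub h3).sub h4
    refine HasDerivAt.congr_deriv hD ?_
    have e1 : x y ^ (-(N * (N - 2)) - 1) = x y ^ (-(N * (N - 2))) / x y := by
      rw [Real.rpow_sub hxpos, Real.rpow_one]
    have e2 : y ^ (-(2*N) - 1) = y ^ (-(2*N)) / y := by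
      rw [Real.rpow_sub hy0, Real.rpow_one]
    rw [e1, e2, hxeq]
    have hne : N - 2*y ≠ 0 := by linarith
    field_simp
    ring
  -- Step 2: G 1 = 0
  have hG1 : G 1 = 0 := by
    rw [hG]
    simp only [hx1, Real.one_rpow, Real.rpow_natCast]
    norm_num
    field_simp
    ring
  -- Step 3: derivative of G at 1
  have hGd : HasDerivAt G (N^2 * (N-1) / (2*(N-2)^2)) 1 := by
    rw [hG]
    have hx1ne : x 1 ≠ 0 := by rw [hx1]; norm_num
    have hXd : HasDerivAt (fun z => x z ^ (-(N * (N - 2))))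
        (-(2/(N-2)) * (-(N * (N - 2))) * x 1 ^ (-(N * (N - 2)) - 1)) 1 :=
      (hdx 1).rpow_const (Or.inl hx1ne)
    have hYd : HasDerivAt (fun z : ℝ => z ^ (-(2 * N))) ((-(2*N)) * (1:ℝ) ^ (-(2*N) - 1)) 1 :=
      Real.hasDerivAt_rpow_const (Or.inl one_ne_zero)
    have hnumA : HasDerivAt (fun z : ℝ => N^2 * ((N-5)*z^2 + (N+3)*z - N))
        (N^2 * (((N-5) * (↑(2:ℕ) * (1:ℝ)^(2-1)) + (N+3) * 1) - 0)) 1 :=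
      ((((hasDerivAt_pow 2 1).const_mul (N-5)).add ((hasDerivAt_id 1).const_mul (N+3))).sub
        (hasDerivAt_const 1 N)).const_mul (N^2)
    have hdenA : HasDerivAt (fun z => 2*(N-2)^2 * (x z)^2 * z^3)
        ((2*(N-2)^2 * (↑(2:ℕ) * x 1 ^ (2-1) * -(2/(N-2)))) * (1:ℝ)^3
          + (2*(N-2)^2 * (x 1)^2) * (↑(3:ℕ) * (1:ℝ)^(3-1))) 1 :=
      (((hdx 1).pow 2).const_mul (2*(N-2)^2)).mul (hasDerivAt_pow 3 1)
    have hdenAne : 2*(N-2)^2 * (x 1)^2 * (1:ℝ)^3 ≠ 0 := by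
      rw [hx1]; simp; intro h; exact hm0 (by linarith [sq_nonneg (N-2)])
    have hA := hnumA.div hdenA hdenAne
    have hnumB : HasDerivAt (fun z => N^2 * (x z ^ (-(N * (N - 2))) * z ^ (-(2 * N))))
        (N^2 * ((-(2/(N-2)) * (-(N * (N - 2))) * x 1 ^ (-(N * (N - 2)) - 1)) * (1:ℝ) ^ (-(2*N))
          + x 1 ^ (-(N * (N - 2))) * ((-(2*N)) * (1:ℝ) ^ (-(2*N) - 1)))) 1 :=
      (hXd.mul hYd).const_mul (N^2)
    have hdenB : HasDerivAt (fun z => 2*(N-2)*(x z)*z)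
        ((2*(N-2) * -(2/(N-2))) * 1 + (2*(N-2)*(x 1)) * 1) 1 :=
      (((hdx 1).const_mul (2*(N-2))).mul (hasDerivAt_id 1))
    have hdenBne : 2*(N-2)*(x 1)*(1:ℝ) ≠ 0 := by rw [hx1]; simpa using hm0
    have hB := hnumB.div hdenB hdenBne
    have hD := hA.sub hB
    refine HasDerivAt.congr_deriv hD ?_
    rw [hx1]
    simp only [Real.one_rpow, Real.rpow_natCast, one_pow]
    norm_num
    field_simp
    ring
  have hc : 0 < N^2 * (N-1) / (2*(N-2)^2) := by
    have h1 : 0 < N^2 * (N-1) := by nlinarith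
    have h2 : 0 < 2*(N-2)^2 := by nlinarith
    exact div_pos h1 h2
  -- Step 4: sign of (z-1) * G z near 1
  have hev : ∀ᶠ z in nhdsWithin (1:ℝ) {(1:ℝ)}ᶜ, 0 < slope G 1 z :=
    (hasDerivAt_iff_tendsto_slope.mp hGd).eventually (eventually_gt_nhds hc)
  obtain ⟨ε, hε0, hball⟩ := Metric.mem_nhdsWithin_iff.mp hev
  set δ : ℝ := min ε (1/2) with hδ
  have hδ0 : 0 < δ := lt_min hε0 (by norm_num)
  have hδle : δ ≤ 1/2 := min_le_right _ _
  have hδε : δ ≤ ε := min_le_left _ _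
  have hpos : ∀ z : ℝ, z ≠ 1 → |z - 1| < δ → 0 < (z - 1) * G z := by
    intro z hz hzd
    have hmem : z ∈ Metric.ball (1:ℝ) ε ∩ {(1:ℝ)}ᶜ := by
      refine ⟨Metric.mem_ball.2 ?_, hz⟩
      rw [Real.dist_eq]; exact lt_of_lt_of_le hzd hδε
    have h0 : 0 < slope G 1 z := hball hmem
    have hz1 : z - 1 ≠ 0 := sub_ne_zero.2 hz
    have hGz : G z = (z - 1) * slope G 1 z := by
      rw [slope_def_field, hG1, sub_zero]; field_simp
    rw [hGz, show (z-1) * ((z-1) * slope G 1 z) = (z-1)^2 * slope G 1 z from by ring]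
    exact mul_pos (pow_two_pos_of_ne_zero hz1) h0
  -- Step 5: strict monotonicity on both sides
  have hsubI : ∀ z ∈ Set.Icc (1 - δ/2) (1 + δ/2), z ∈ Set.Ioo (1/2:ℝ) (3/2) := by
    rintro z ⟨h1, h2⟩; constructor <;> [linarith; linarith]
  have hcont : ContinuousOn f (Set.Icc (1 - δ/2) (1 + δ/2)) := fun z hz =>
    ((key z (hsubI z hz)).continuousAt).continuousWithinAt
  have hmonoR : StrictMonoOn f (Set.Icc 1 (1 + δ/2)) := by
    apply strictMonoOn_of_deriv_pos (convex_Icc _ _)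
    · exact hcont.mono (Set.Icc_subset_Icc (by linarith) le_rfl)
    · intro z hz
      rw [interior_Icc] at hz
      obtain ⟨hz1, hz2⟩ := hz
      have hmem : z ∈ Set.Ioo (1/2:ℝ) (3/2) := hsubI z ⟨by linarith, by linarith⟩
      rw [(key z hmem).deriv]
      exact hpos z (ne_of_gt hz1) (by rw [abs_lt]; constructor <;> linarith)
  have hmonoL : StrictMonoOn f (Set.Icc (1 - δ/2) 1) := by
    apply strictMonoOn_of_deriv_pos (convex_Icc _ _)
    · exact hcont.mono (Set.Icc_subset_Icc le_rfl (by linarith))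
    · intro z hz
      rw [interior_Icc] at hz
      obtain ⟨hz1, hz2⟩ := hz
      have hmem : z ∈ Set.Ioo (1/2:ℝ) (3/2) := hsubI z ⟨by linarith, by linarith⟩
      rw [(key z hmem).deriv]
      exact hpos z (ne_of_lt hz2) (by rw [abs_lt]; constructor <;> linarith)
  -- Step 6: conclude
  constructor
  · intro hmax
    obtain ⟨ε', hε'0, hb'⟩ := Metric.eventually_nhds_iff.mp hmax
    set t : ℝ := min (δ/2) (ε'/2) with ht
    have ht0 : 0 < t := lt_min (by linarith) (by linarith)
    have htδ : t ≤ δ/2 := min_le_left _ _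
    have htε : t ≤ ε'/2 := min_le_right _ _
    have h1 : f 1 < f (1 + t) :=
      hmonoR ⟨le_rfl, by linarith⟩ ⟨by linarith, by linarith⟩ (by linarith)
    have h2 : f (1 + t) ≤ f 1 := hb' (by
      rw [Real.dist_eq, show (1:ℝ) + t - 1 = t from by ring, abs_of_pos ht0]; linarith)
    linarith
  · intro hmin
    obtain ⟨ε', hε'0, hb'⟩ := Metric.eventually_nhds_iff.mp hmin
    set t : ℝ := min (δ/2) (ε'/2) with ht
    have ht0 : 0 < t := lt_min (by linarith) (by linarith)
    have htδ : t ≤ δ/2 := min_le_left _ _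
    have htε : t ≤ ε'/2 := min_le_right _ _
    have h1 : f (1 - t) < f 1 :=
      hmonoL ⟨by linarith, by linarith⟩ ⟨by linarith, le_rfl⟩ (by linarith)
    have h2 : f 1 ≤ f (1 - t) := hb' (by
      rw [Real.dist_eq, show (1:ℝ) - t - 1 = -t from by ring, abs_neg, abs_of_pos ht0]; linarith)
    linarith



/-- Along the curve of unit-volume `SU(n−1)`-invariant metrics on `SU(n)` given by
`x(y) = −(2/(n−2))y + n/(n−2)`, the scalar curvature
`f(y) = (n²−3n+2)/(4x(y)) + (n−1)/y − (n−2)x(y)/(4y²) − (1/4)x(y)^{−n(n−2)}y^{−2n}`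
has neither a local maximum nor a local minimum at `y = 1`. -/
theorem scal_SUn_curve_not_localMax (n : ℕ) (hn : 3 ≤ n) (x f : ℝ → ℝ)
    (hx : ∀ y : ℝ, x y = -(2 / ((n : ℝ) - 2)) * y + (n : ℝ) / ((n : ℝ) - 2))
    (hf : ∀ y : ℝ, f y =
      ((n : ℝ) ^ 2 - 3 * (n : ℝ) + 2) / (4 * x y) + ((n : ℝ) - 1) / y
        - ((n : ℝ) - 2) * x y / (4 * y ^ 2)
        - (1 / 4) * (x y) ^ (-((n : ℝ) * ((n : ℝ) - 2))) * y ^ (-(2 * (n : ℝ)))) :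
    ¬ IsLocalMax f 1 ∧ ¬ IsLocalMin f 1 := by
  exact scal_aux_s9 (n : ℝ) (by exact_mod_cast hn) x f hx hf
end

section
/- Fix an integer n ≥ 3 and set d₁ = (n−1)² − 1, d₂ = 2(n−1). Let S : ℝ³ → ℝ be defined on {x > 0, y > 0, z > 0} by S(x,y,z) = (1/2)(d₁/x + d₂/y + 1/z) − (1/4)( (n−1)(n−2)/x + (n−2)(x/y² + 2/x) + (2/z + z/y²) ), and let V = {(x,y,z) : x > 0, y > 0, z > 0, x^{d₁} y^{d₂} z = 1}. Then S does not have a local maximum on V at the point (1,1,1); that is, every neighborhood of (1,1,1) contains a point of V at which S exceeds S(1,1,1). -/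
open Set

lemma scal_key (m : ℕ) (w : ℝ) (hw : 1 < w) :
    0 < ((m:ℝ)+2)*((m:ℝ)+1)*w^(2*m+6) + 4*((m:ℝ)+2)*w^(m+3)
      - ((m:ℝ)+3)^2*w^(2*m+4) - ((m:ℝ)+1) := by
  set M : ℝ := (m:ℝ) with hM
  have hM0 : 0 ≤ M := Nat.cast_nonneg m
  set a : ℝ := (M+2)*(M+1) with ha
  set b : ℝ := 4*(M+2) with hb
  set c : ℝ := (M+3)^2 with hc
  set f : ℝ → ℝ := fun x => a*x^(2*m+6) + b*x^(m+3) - c*x^(2*m+4) - (M+1) with hf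
  set f₁ : ℝ → ℝ := fun x => (2*M+6)*a*x^(2*m+5) + (M+3)*b*x^(m+2)
      - (2*M+4)*c*x^(2*m+3) with hf₁
  set f₂ : ℝ → ℝ := fun x => (2*M+5)*(2*M+6)*a*x^(2*m+4) + (M+2)*(M+3)*b*x^(m+1)
      - (2*M+3)*(2*M+4)*c*x^(2*m+2) with hf₂
  set f₃ : ℝ → ℝ := fun x => (2*M+4)*(2*M+5)*(2*M+6)*a*x^(2*m+3)
      + (M+1)*(M+2)*(M+3)*b*x^m - (2*M+2)*(2*M+3)*(2*M+4)*c*x^(2*m+1) with hf₃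
  -- derivatives
  have hd0 : ∀ x : ℝ, HasDerivAt f (f₁ x) x := by
    intro x
    have h1 := (hasDerivAt_pow (2*m+6) x).const_mul a
    have h2 := (hasDerivAt_pow (m+3) x).const_mul b
    have h3 := (hasDerivAt_pow (2*m+4) x).const_mul c
    have := ((h1.add h2).sub h3).sub_const (M+1)
    convert this using 1
    · rfl
    · rfl
    · rfl
    have e1 : 2*m+6-1 = 2*m+5 := by omega
    have e2 : m+3-1 = m+2 := by omega
    have e3 : 2*m+4-1 = 2*m+3 := by omega
    rw [e1, e2, e3]
    push_cast
    ring
  have hd1 : ∀ x : ℝ, HasDerivAt f₁ (f₂ x) x := by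
    intro x
    have h1 := (hasDerivAt_pow (2*m+5) x).const_mul ((2*M+6)*a)
    have h2 := (hasDerivAt_pow (m+2) x).const_mul ((M+3)*b)
    have h3 := (hasDerivAt_pow (2*m+3) x).const_mul ((2*M+4)*c)
    have := (h1.add h2).sub h3
    convert this using 1
    · rfl
    · rfl
    · rfl
    have e1 : 2*m+5-1 = 2*m+4 := by omega
    have e2 : m+2-1 = m+1 := by omega
    have e3 : 2*m+3-1 = 2*m+2 := by omega
    rw [e1, e2, e3]
    push_cast
    ring
  have hd2 : ∀ x : ℝ, HasDerivAt f₂ (f₃ x) x := by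
    intro x
    have h1 := (hasDerivAt_pow (2*m+4) x).const_mul ((2*M+5)*(2*M+6)*a)
    have h2 := (hasDerivAt_pow (m+1) x).const_mul ((M+2)*(M+3)*b)
    have h3 := (hasDerivAt_pow (2*m+2) x).const_mul ((2*M+3)*(2*M+4)*c)
    have := (h1.add h2).sub h3
    convert this using 1
    · rfl
    · rfl
    · rfl
    have e1 : 2*m+4-1 = 2*m+3 := by omega
    have e2 : m+1-1 = m := by omega
    have e3 : 2*m+2-1 = 2*m+1 := by omega
    rw [e1, e2, e3]
    push_cast
    ring
  -- positivity of f₃ on Ioi 1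
  have h3pos : ∀ x : ℝ, 1 < x → 0 < f₃ x := by
    intro x hx
    have hx0 : (0:ℝ) < x := by linarith
    have hp1 : (0:ℝ) < x^(2*m+1) := pow_pos hx0 _
    have hpm : (0:ℝ) < x^m := pow_pos hx0 _
    have hmono : x^(2*m+1) ≤ x^(2*m+3) := pow_le_pow_right₀ hx.le (by omega)
    have hApos : (0:ℝ) ≤ (2*M+4)*(2*M+5)*(2*M+6)*a := by positivity
    have hAC : (2*M+4)*(2*M+5)*(2*M+6)*a - (2*M+2)*(2*M+3)*(2*M+4)*c
        = 4*(M+1)*(M+2)*(M+3) := by rw [ha, hc]; ring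
    have hBpos : (0:ℝ) < (M+1)*(M+2)*(M+3)*b := by positivity
    have key : f₃ x = (2*M+4)*(2*M+5)*(2*M+6)*a * (x^(2*m+3) - x^(2*m+1))
        + ((2*M+4)*(2*M+5)*(2*M+6)*a - (2*M+2)*(2*M+3)*(2*M+4)*c) * x^(2*m+1)
        + (M+1)*(M+2)*(M+3)*b*x^m := by rw [hf₃]; ring
    rw [key, hAC]
    have t1 : 0 ≤ (2*M+4)*(2*M+5)*(2*M+6)*a * (x^(2*m+3) - x^(2*m+1)) :=
      mul_nonneg hApos (by linarith)
    have t2 : 0 < 4*(M+1)*(M+2)*(M+3) * x^(2*m+1) := by positivity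
    have t3 : 0 < (M+1)*(M+2)*(M+3)*b*x^m := by positivity
    linarith
  -- f₂ 1 = 0, f₁ 1 = 0, f 1 = 0
  have hf21 : f₂ 1 = 0 := by simp only [hf₂, one_pow, mul_one, ha, hb, hc]; ring
  have hf11 : f₁ 1 = 0 := by simp only [hf₁, one_pow, mul_one, ha, hb, hc]; ring
  have hf01 : f 1 = 0 := by simp only [hf, one_pow, mul_one, ha, hb, hc]; ring
  -- chain of strict monotonicity
  have step : ∀ g g' : ℝ → ℝ, (∀ x : ℝ, HasDerivAt g (g' x) x) →
      (∀ x : ℝ, 1 < x → 0 < g' x) → g 1 = 0 → ∀ x : ℝ, 1 < x → 0 < g x := by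
    intro g g' hd hpos hg1 x hx
    have hmono : StrictMonoOn g (Ici 1) := by
      refine strictMonoOn_of_deriv_pos (convex_Ici 1) ?_ ?_
      · exact (HasDerivAt.continuousOn (fun y _ => hd y))
      · intro y hy
        rw [interior_Ici] at hy
        rw [(hd y).deriv]
        exact hpos y hy
    have := hmono (self_mem_Ici) (le_of_lt (by exact lt_of_lt_of_le hx (le_refl x)) : (1:ℝ) ≤ x) hx
    rw [hg1] at this
    exact this
  have h2pos := step f₂ f₃ hd2 h3pos hf21
  have h1pos := step f₁ f₂ hd1 h2pos hf11
  have h0pos := step f f₁ hd0 h1pos hf01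
  have := h0pos w hw
  simpa [hf, ha, hb, hc] using this

/-- The bi-invariant metric on `SU(n)`, `n ≥ 3`, is not a local maximum of scalar
curvature among unit-volume `SU(n−1)`-invariant metrics: the scalar curvature `S(x,y,z)`
restricted to the unit-volume variety `V = {x^{d₁} y^{d₂} z = 1}` does not have a local
maximum at `(1,1,1)`. -/
theorem scal_SUn_not_localMaxOn (n : ℕ) (hn : 3 ≤ n) (d₁ d₂ : ℝ)
    (hd₁ : d₁ = ((n : ℝ) - 1) ^ 2 - 1) (hd₂ : d₂ = 2 * ((n : ℝ) - 1))
    (S : ℝ × ℝ × ℝ → ℝ)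
    (hS : ∀ p : ℝ × ℝ × ℝ, S p =
      (1 / 2) * (d₁ / p.1 + d₂ / p.2.1 + 1 / p.2.2)
        - (1 / 4) * (((n : ℝ) - 1) * ((n : ℝ) - 2) / p.1
          + ((n : ℝ) - 2) * (p.1 / p.2.1 ^ 2 + 2 / p.1)
          + (2 / p.2.2 + p.2.2 / p.2.1 ^ 2)))
    (V : Set (ℝ × ℝ × ℝ))
    (hV : V = {p : ℝ × ℝ × ℝ | 0 < p.1 ∧ 0 < p.2.1 ∧ 0 < p.2.2 ∧
      p.1 ^ d₁ * p.2.1 ^ d₂ * p.2.2 = 1}) :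
    ∀ U ∈ nhds ((1, 1, 1) : ℝ × ℝ × ℝ), ∃ p ∈ U, p ∈ V ∧ S (1, 1, 1) < S p := by
  intro U hU
  obtain ⟨m, rfl⟩ : ∃ m, n = m + 3 := ⟨n - 3, by omega⟩
  have hcast : ((m + 3 : ℕ) : ℝ) = (m : ℝ) + 3 := by push_cast; ring
  set γ : ℝ → ℝ × ℝ × ℝ := fun w => ((w^2)⁻¹, w^(m+1), w^(2*m+2)) with hγ
  have hγ1 : γ 1 = ((1, 1, 1) : ℝ × ℝ × ℝ) := by simp [hγ]
  have hcont : ContinuousAt γ 1 := by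
    refine ContinuousAt.prodMk ?_ (ContinuousAt.prodMk ?_ ?_)
    · exact ((continuousAt_id.pow 2).inv₀ (by norm_num))
    · exact continuousAt_id.pow _
    · exact continuousAt_id.pow _
  have hU' : U ∈ nhds (γ 1) := by rw [hγ1]; exact hU
  have hpre : γ ⁻¹' U ∈ nhds (1 : ℝ) := hcont hU'
  have hpre' : γ ⁻¹' U ∩ Set.Ioi 1 ∈ nhdsWithin (1 : ℝ) (Set.Ioi 1) :=
    Filter.inter_mem (nhdsWithin_le_nhds hpre) self_mem_nhdsWithin
  obtain ⟨w, hwU, hw1⟩ := Filter.nonempty_of_mem hpre'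
  have hw1 : (1 : ℝ) < w := hw1
  have hw0 : (0 : ℝ) < w := by linarith
  have hwne : w ≠ 0 := ne_of_gt hw0
  refine ⟨γ w, hwU, ?_, ?_⟩
  · -- membership in V
    rw [hV]
    refine ⟨by positivity, by positivity, by positivity, ?_⟩
    have hd₁n : d₁ = (((m+1)*(m+3) : ℕ) : ℝ) := by rw [hd₁, hcast]; push_cast; ring
    have hd₂n : d₂ = ((2*m+4 : ℕ) : ℝ) := by rw [hd₂, hcast]; push_cast; ring
    show ((w^2)⁻¹) ^ d₁ * (w^(m+1)) ^ d₂ * w^(2*m+2) = 1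
    rw [hd₁n, hd₂n, Real.rpow_natCast, Real.rpow_natCast]
    rw [inv_pow, ← pow_mul, ← pow_mul, mul_assoc, ← pow_add,
      inv_mul_eq_one₀ (pow_ne_zero _ hwne)]
    congr 1
    ring
  · -- the scalar curvature inequality
    have hfw := scal_key m w hw1
    rw [← sub_pos]
    have hrw : S (γ w) - S (1, 1, 1) =
        (((m:ℝ)+2)*((m:ℝ)+1)*w^(2*m+6) + 4*((m:ℝ)+2)*w^(m+3)
          - ((m:ℝ)+3)^2*w^(2*m+4) - ((m:ℝ)+1)) / (4 * w^(2*m+4)) := by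
      rw [hS, hS, hd₁, hd₂]
      simp only [hγ, hcast]
      field_simp
      ring
    rw [hrw]
    positivity
end

section
/- Fix an integer n ≥ 3, set a = (16n/((2n−1)·16ⁿ))^{1/(n+1−2n²)} and y(x) = −((n−2)/4)x + (n/4)a, and define p(x) = 4(n−1)(n−2)/x + 8(n−1)/y(x) − (n−2)x/y(x)² on the interval where x > 0 and y(x) > 0. Then p'(a) = 0, p''(a) = 2(n−2)n²/a³, and p'''(a) = −6(n−2)n²/a⁴. -/
set_option maxHeartbeats 1000000 in
theorem scal_aux_s11 (ν a : ℝ) (ha0 : 0 < a) (y p : ℝ → ℝ)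
    (hy : ∀ x : ℝ, y x = -((ν - 2) / 4) * x + (ν / 4) * a)
    (hp : ∀ x : ℝ, p x = 4 * (ν - 1) * (ν - 2) / x
      + 8 * (ν - 1) / y x - (ν - 2) * x / (y x) ^ 2) :
    deriv p a = 0 ∧
      deriv (deriv p) a = 2 * (ν - 2) * ν ^ 2 / a ^ 3 ∧
      deriv (deriv (deriv p)) a = -(6 * (ν - 2) * ν ^ 2 / a ^ 4) := by
  have hyfun : y = fun x => -((ν - 2) / 4) * x + (ν / 4) * a := funext hy
  have hpfun : p = fun x => 4 * (ν - 1) * (ν - 2) / x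
      + 8 * (ν - 1) / y x - (ν - 2) * x / (y x) ^ 2 := funext hp
  have hyD : ∀ x : ℝ, HasDerivAt y (-((ν - 2) / 4)) x := by
    intro x
    rw [hyfun]
    simpa using (hasDerivAt_id' (x := x)).const_mul (-((ν - 2) / 4)) |>.add_const ((ν / 4) * a)
  have hycont : Continuous y := by rw [hyfun]; continuity
  have hyA : y a = a / 2 := by rw [hy]; ring
  set U : Set ℝ := {x | 0 < x ∧ 0 < y x} with hU
  have hUopen : IsOpen U :=
    (isOpen_lt continuous_const continuous_id).and (isOpen_lt continuous_const hycont)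
  have haU : a ∈ U := ⟨ha0, by rw [hyA]; positivity⟩
  -- explicit derivative formulas
  set P1 : ℝ → ℝ := fun x => -(4 * (ν - 1) * (ν - 2)) / x ^ 2
      + 2 * (ν - 1) * (ν - 2) / (y x) ^ 2
      - (ν - 2) * (y x + ((ν - 2) / 2) * x) / (y x) ^ 3 with hP1
  set P2 : ℝ → ℝ := fun x => 8 * (ν - 1) * (ν - 2) / x ^ 3
      + (ν - 1) * (ν - 2) ^ 2 / (y x) ^ 3
      - (ν - 2) ^ 2 / 4 * (4 * y x + 3 * (ν - 2) / 2 * x) / (y x) ^ 4 with hP2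
  set P3 : ℝ → ℝ := fun x => -(24 * (ν - 1) * (ν - 2)) / x ^ 4
      + 3 / 4 * (ν - 1) * (ν - 2) ^ 3 / (y x) ^ 4
      - (ν - 2) ^ 3 / 16 * (18 * y x + 6 * (ν - 2) * x) / (y x) ^ 5 with hP3
  have hD1 : ∀ x ∈ U, HasDerivAt p (P1 x) x := by
    rintro x ⟨hx, hyx⟩
    have hx0 : x ≠ 0 := ne_of_gt hx
    have hy0 : y x ≠ 0 := ne_of_gt hyx
    have h := (((hasDerivAt_const x (4 * (ν - 1) * (ν - 2))).div (hasDerivAt_id' (x := x)) hx0).add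
        ((hasDerivAt_const x (8 * (ν - 1))).div (hyD x) hy0)).sub
        (((hasDerivAt_id' (x := x)).const_mul (ν - 2)).div ((hyD x).pow 2) (pow_ne_zero 2 hy0))
    rw [hpfun]
    convert h using 1
    · rfl
    · rfl
    · rfl
    rw [hP1]
    simp only [Pi.pow_apply]
    field_simp
    ring
  have hD2 : ∀ x ∈ U, HasDerivAt P1 (P2 x) x := by
    rintro x ⟨hx, hyx⟩
    have hx0 : x ≠ 0 := ne_of_gt hx
    have hy0 : y x ≠ 0 := ne_of_gt hyx
    have hnum : HasDerivAt (fun x => y x + ((ν - 2) / 2) * x)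
        (-((ν - 2) / 4) + (ν - 2) / 2) x :=
      (hyD x).add (by simpa using (hasDerivAt_id' (x := x)).const_mul ((ν - 2) / 2))
    have h := (((hasDerivAt_const x (-(4 * (ν - 1) * (ν - 2)))).div
          ((hasDerivAt_id' (x := x)).pow 2) (pow_ne_zero 2 hx0)).add
        ((hasDerivAt_const x (2 * (ν - 1) * (ν - 2))).div ((hyD x).pow 2) (pow_ne_zero 2 hy0))).sub
        ((hnum.const_mul (ν - 2)).div ((hyD x).pow 3) (pow_ne_zero 3 hy0))
    rw [hP1]
    convert h using 1
    · rfl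
    · rfl
    · rfl
    rw [hP2]
    simp only [Pi.pow_apply]
    field_simp
    ring
  have hD3 : ∀ x ∈ U, HasDerivAt P2 (P3 x) x := by
    rintro x ⟨hx, hyx⟩
    have hx0 : x ≠ 0 := ne_of_gt hx
    have hy0 : y x ≠ 0 := ne_of_gt hyx
    have hnum : HasDerivAt (fun x => 4 * y x + 3 * (ν - 2) / 2 * x)
        (4 * -((ν - 2) / 4) + 3 * (ν - 2) / 2) x :=
      ((hyD x).const_mul 4).add (by simpa using (hasDerivAt_id' (x := x)).const_mul (3 * (ν - 2) / 2))
    have h := (((hasDerivAt_const x (8 * (ν - 1) * (ν - 2))).div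
          ((hasDerivAt_id' (x := x)).pow 3) (pow_ne_zero 3 hx0)).add
        ((hasDerivAt_const x ((ν - 1) * (ν - 2) ^ 2)).div ((hyD x).pow 3) (pow_ne_zero 3 hy0))).sub
        ((hnum.const_mul ((ν - 2) ^ 2 / 4)).div ((hyD x).pow 4) (pow_ne_zero 4 hy0))
    rw [hP2]
    convert h using 1
    · rfl
    · rfl
    · rfl
    rw [hP3]
    simp only [Pi.pow_apply]
    field_simp
    ring
  have hderiv1 : ∀ x ∈ U, deriv p x = P1 x := fun x hx => (hD1 x hx).deriv
  have hderiv2 : ∀ x ∈ U, deriv (deriv p) x = P2 x := by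
    intro x hx
    have hev : deriv p =ᶠ[nhds x] P1 :=
      Filter.eventuallyEq_of_mem (hUopen.mem_nhds hx) hderiv1
    rw [hev.deriv_eq, (hD2 x hx).deriv]
  have hderiv3 : deriv (deriv (deriv p)) a = P3 a := by
    have hev : deriv (deriv p) =ᶠ[nhds a] P2 :=
      Filter.eventuallyEq_of_mem (hUopen.mem_nhds haU) hderiv2
    rw [hev.deriv_eq, (hD3 a haU).deriv]
  have ha0' : a ≠ 0 := ne_of_gt ha0
  refine ⟨?_, ?_, ?_⟩
  · rw [hderiv1 a haU, hP1]; simp only [hyA]; field_simp; ring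
  · rw [hderiv2 a haU, hP2]; simp only [hyA]; field_simp; ring
  · rw [hderiv3, hP3]; simp only [hyA]; field_simp; ring

/-- For the curve of unit-volume `SU(2n−1)`-invariant metrics on `SU(2n)/Sp(n)`:
with `a = (16n/((2n−1)16ⁿ))^{1/(n+1−2n²)}`, `y(x) = −((n−2)/4)x + (n/4)a` and
`p(x) = 4(n−1)(n−2)/x + 8(n−1)/y(x) − (n−2)x/y(x)²`, one has `p'(a) = 0`,
`p''(a) = 2(n−2)n²/a³` and `p'''(a) = −6(n−2)n²/a⁴`. -/
theorem scal_SU2n_Spn_p_derivatives (n : ℕ) (hn : 3 ≤ n) (a : ℝ)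
    (ha : a = (16 * (n : ℝ) / ((2 * (n : ℝ) - 1) * 16 ^ n))
      ^ (1 / ((n : ℝ) + 1 - 2 * (n : ℝ) ^ 2)))
    (y p : ℝ → ℝ)
    (hy : ∀ x : ℝ, y x = -(((n : ℝ) - 2) / 4) * x + ((n : ℝ) / 4) * a)
    (hp : ∀ x : ℝ, p x = 4 * ((n : ℝ) - 1) * ((n : ℝ) - 2) / x
      + 8 * ((n : ℝ) - 1) / y x - ((n : ℝ) - 2) * x / (y x) ^ 2) :
    deriv p a = 0 ∧
      iteratedDeriv 2 p a = 2 * ((n : ℝ) - 2) * (n : ℝ) ^ 2 / a ^ 3 ∧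
      iteratedDeriv 3 p a = -(6 * ((n : ℝ) - 2) * (n : ℝ) ^ 2 / a ^ 4) := by
  have hn3 : (3 : ℝ) ≤ (n : ℝ) := by exact_mod_cast hn
  have ha0 : 0 < a := by
    rw [ha]
    apply Real.rpow_pos_of_pos
    apply div_pos (by positivity)
    exact mul_pos (by nlinarith) (by positivity)
  obtain ⟨h1, h2, h3⟩ := scal_aux_s11 (n : ℝ) a ha0 y p hy hp
  refine ⟨h1, ?_, ?_⟩
  · rw [show (2 : ℕ) = 1 + 1 from rfl, iteratedDeriv_succ, iteratedDeriv_one]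
    exact h2
  · rw [show (3 : ℕ) = 1 + 1 + 1 from rfl, iteratedDeriv_succ, iteratedDeriv_succ,
      iteratedDeriv_one]
    exact h3
end

section
/- Fix an integer n ≥ 3, set a = (16n/((2n−1)·16ⁿ))^{1/(n+1−2n²)} and y(x) = −((n−2)/4)x + (n/4)a, and define scal(x) = (2n−1)( 4(n−1)(n−2)/x + 8(n−1)/y(x) − (n−2)x/y(x)² − x^{−(2n−1)(n−2)} y(x)^{−(4n−2)} ) on the interval where x > 0 and y(x) > 0. Then scal'(a) = 0, scal''(a) = 0, and scal'''(a) ≠ 0. -/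
open Real Filter

noncomputable section ScalSU

/-- the linear function `y`. -/
def yv (ν A x : ℝ) : ℝ := -((ν - 2) / 4) * x + ν / 4 * A

/-- rational part of scal (divided by 2ν−1). -/
def Pf (ν A x : ℝ) : ℝ :=
  4 * (ν - 1) * (ν - 2) / x + 8 * (ν - 1) / yv ν A x - (ν - 2) * x / (yv ν A x) ^ 2

def P1 (ν A x : ℝ) : ℝ :=
  -(4 * (ν - 1) * (ν - 2)) / x ^ 2 + 8 * (ν - 1) * ((ν - 2) / 4) / (yv ν A x) ^ 2
    - (ν - 2) * (1 / (yv ν A x) ^ 2 + 2 * ((ν - 2) / 4) * x / (yv ν A x) ^ 3)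

def P2 (ν A x : ℝ) : ℝ :=
  2 * (4 * (ν - 1) * (ν - 2)) / x ^ 3 + 2 * (8 * (ν - 1)) * ((ν - 2) / 4) ^ 2 / (yv ν A x) ^ 3
    - (ν - 2) * (4 * ((ν - 2) / 4) / (yv ν A x) ^ 3 + 6 * ((ν - 2) / 4) ^ 2 * x / (yv ν A x) ^ 4)

def P3 (ν A x : ℝ) : ℝ :=
  -(6 * (4 * (ν - 1) * (ν - 2))) / x ^ 4 + 6 * (8 * (ν - 1)) * ((ν - 2) / 4) ^ 3 / (yv ν A x) ^ 4
    - (ν - 2) * (18 * ((ν - 2) / 4) ^ 2 / (yv ν A x) ^ 4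
        + 24 * ((ν - 2) / 4) ^ 3 * x / (yv ν A x) ^ 5)

def Lf (ν A x : ℝ) : ℝ :=
  -((2 * ν - 1) * (ν - 2)) / x + (4 * ν - 2) * ((ν - 2) / 4) / yv ν A x

def L1 (ν A x : ℝ) : ℝ :=
  (2 * ν - 1) * (ν - 2) / x ^ 2 + (4 * ν - 2) * ((ν - 2) / 4) ^ 2 / (yv ν A x) ^ 2

def L2 (ν A x : ℝ) : ℝ :=
  -(2 * ((2 * ν - 1) * (ν - 2))) / x ^ 3 + 2 * (4 * ν - 2) * ((ν - 2) / 4) ^ 3 / (yv ν A x) ^ 3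

def Rf (ν A x : ℝ) : ℝ :=
  Real.exp (Real.log x * -((2 * ν - 1) * (ν - 2)) + Real.log (yv ν A x) * -(4 * ν - 2))

def F1 (ν A x : ℝ) : ℝ := (2 * ν - 1) * (P1 ν A x - Rf ν A x * Lf ν A x)

def F2 (ν A x : ℝ) : ℝ :=
  (2 * ν - 1) * (P2 ν A x - Rf ν A x * ((Lf ν A x) ^ 2 + L1 ν A x))

def F3 (ν A x : ℝ) : ℝ :=
  (2 * ν - 1) * (P3 ν A x
    - Rf ν A x * ((Lf ν A x) ^ 3 + 3 * Lf ν A x * L1 ν A x + L2 ν A x))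

lemma yv_hasDerivAt (ν A x : ℝ) : HasDerivAt (yv ν A) (-((ν - 2) / 4)) x := by
  have h : HasDerivAt (yv ν A) (-((ν - 2) / 4) * 1) x :=
    ((hasDerivAt_id x).const_mul (-((ν - 2) / 4))).add_const (ν / 4 * A)
  simpa using h

lemma Pf_hasDerivAt (ν A x : ℝ) (hx : x ≠ 0) (hy : yv ν A x ≠ 0) :
    HasDerivAt (Pf ν A) (P1 ν A x) x := by
  have t1 := (hasDerivAt_const x (4 * (ν - 1) * (ν - 2))).div (hasDerivAt_id x) hx
  have t2 := (hasDerivAt_const x (8 * (ν - 1))).div (yv_hasDerivAt ν A x) hy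
  have t3 := ((hasDerivAt_id x).const_mul (ν - 2)).div
      ((yv_hasDerivAt ν A x).pow 2) (pow_ne_zero 2 hy)
  have h := (t1.add t2).sub t3
  refine h.congr_deriv ?_
  simp only [P1, Pi.pow_apply, id, Nat.cast_ofNat, Nat.reduceSub, pow_one]
  field_simp
  ring

lemma P1_hasDerivAt (ν A x : ℝ) (hx : x ≠ 0) (hy : yv ν A x ≠ 0) :
    HasDerivAt (P1 ν A) (P2 ν A x) x := by
  have t1 := (hasDerivAt_const x (-(4 * (ν - 1) * (ν - 2)))).div
      (hasDerivAt_pow 2 x) (pow_ne_zero 2 hx)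
  have t2 := (hasDerivAt_const x (8 * (ν - 1) * ((ν - 2) / 4))).div
      ((yv_hasDerivAt ν A x).pow 2) (pow_ne_zero 2 hy)
  have t3a := (hasDerivAt_const x (1 : ℝ)).div
      ((yv_hasDerivAt ν A x).pow 2) (pow_ne_zero 2 hy)
  have t3b := ((hasDerivAt_id x).const_mul (2 * ((ν - 2) / 4))).div
      ((yv_hasDerivAt ν A x).pow 3) (pow_ne_zero 3 hy)
  have h := (t1.add t2).sub ((t3a.add t3b).const_mul (ν - 2))
  refine h.congr_deriv ?_
  simp only [P2, Pi.pow_apply, id, Nat.cast_ofNat, Nat.reduceSub, pow_one]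
  field_simp
  ring

lemma P2_hasDerivAt (ν A x : ℝ) (hx : x ≠ 0) (hy : yv ν A x ≠ 0) :
    HasDerivAt (P2 ν A) (P3 ν A x) x := by
  have t1 := (hasDerivAt_const x (2 * (4 * (ν - 1) * (ν - 2)))).div
      (hasDerivAt_pow 3 x) (pow_ne_zero 3 hx)
  have t2 := (hasDerivAt_const x (2 * (8 * (ν - 1)) * ((ν - 2) / 4) ^ 2)).div
      ((yv_hasDerivAt ν A x).pow 3) (pow_ne_zero 3 hy)
  have t3a := (hasDerivAt_const x (4 * ((ν - 2) / 4))).div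
      ((yv_hasDerivAt ν A x).pow 3) (pow_ne_zero 3 hy)
  have t3b := ((hasDerivAt_id x).const_mul (6 * ((ν - 2) / 4) ^ 2)).div
      ((yv_hasDerivAt ν A x).pow 4) (pow_ne_zero 4 hy)
  have h := (t1.add t2).sub ((t3a.add t3b).const_mul (ν - 2))
  refine h.congr_deriv ?_
  simp only [P3, Pi.pow_apply, id, Nat.cast_ofNat, Nat.reduceSub, pow_one]
  field_simp
  ring

lemma Lf_hasDerivAt (ν A x : ℝ) (hx : x ≠ 0) (hy : yv ν A x ≠ 0) :
    HasDerivAt (Lf ν A) (L1 ν A x) x := by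
  have t1 := (hasDerivAt_const x (-((2 * ν - 1) * (ν - 2)))).div (hasDerivAt_id x) hx
  have t2 := (hasDerivAt_const x ((4 * ν - 2) * ((ν - 2) / 4))).div (yv_hasDerivAt ν A x) hy
  have h := t1.add t2
  refine h.congr_deriv ?_
  simp only [L1, Pi.pow_apply, id, Nat.cast_ofNat, Nat.reduceSub, pow_one]
  field_simp
  ring

lemma L1_hasDerivAt (ν A x : ℝ) (hx : x ≠ 0) (hy : yv ν A x ≠ 0) :
    HasDerivAt (L1 ν A) (L2 ν A x) x := by
  have t1 := (hasDerivAt_const x ((2 * ν - 1) * (ν - 2))).div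
      (hasDerivAt_pow 2 x) (pow_ne_zero 2 hx)
  have t2 := (hasDerivAt_const x ((4 * ν - 2) * ((ν - 2) / 4) ^ 2)).div
      ((yv_hasDerivAt ν A x).pow 2) (pow_ne_zero 2 hy)
  have h := t1.add t2
  refine h.congr_deriv ?_
  simp only [L2, Pi.pow_apply, id, Nat.cast_ofNat, Nat.reduceSub, pow_one]
  field_simp
  ring

lemma Rf_hasDerivAt (ν A x : ℝ) (hx : x ≠ 0) (hy : yv ν A x ≠ 0) :
    HasDerivAt (Rf ν A) (Rf ν A x * Lf ν A x) x := by
  have hu : HasDerivAt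
      (fun t => Real.log t * -((2 * ν - 1) * (ν - 2)) + Real.log (yv ν A t) * -(4 * ν - 2))
      (x⁻¹ * -((2 * ν - 1) * (ν - 2))
        + (yv ν A x)⁻¹ * (-((ν - 2) / 4)) * -(4 * ν - 2)) x := by
    exact ((Real.hasDerivAt_log hx).mul_const _).add
      (((Real.hasDerivAt_log hy).comp x (yv_hasDerivAt ν A x)).mul_const _)
  have h := (Real.hasDerivAt_exp _).comp x hu
  refine h.congr_deriv ?_
  simp only [Rf, Lf]
  field_simp

end ScalSU

set_option maxHeartbeats 1600000 in
/-- Along the curve of unit-volume `SU(2n−1)`-invariant metrics on `SU(2n)/Sp(n)` with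
`a = (16n/((2n−1)16ⁿ))^{1/(n+1−2n²)}` and `y(x) = −((n−2)/4)x + (n/4)a`, the scalar
curvature `scal(x) = (2n−1)(4(n−1)(n−2)/x + 8(n−1)/y(x) − (n−2)x/y(x)² − x^{−(2n−1)(n−2)}y(x)^{−(4n−2)})`
satisfies `scal'(a) = 0`, `scal''(a) = 0` and `scal'''(a) ≠ 0`. -/
theorem scal_SU2n_Spn_inflection (n : ℕ) (hn : 3 ≤ n) (a : ℝ)
    (ha : a = (16 * (n : ℝ) / ((2 * (n : ℝ) - 1) * 16 ^ n))
      ^ (1 / ((n : ℝ) + 1 - 2 * (n : ℝ) ^ 2)))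
    (y scal : ℝ → ℝ)
    (hy : ∀ x : ℝ, y x = -(((n : ℝ) - 2) / 4) * x + ((n : ℝ) / 4) * a)
    (hscal : ∀ x : ℝ, scal x = (2 * (n : ℝ) - 1) *
      (4 * ((n : ℝ) - 1) * ((n : ℝ) - 2) / x + 8 * ((n : ℝ) - 1) / y x
        - ((n : ℝ) - 2) * x / (y x) ^ 2
        - x ^ (-((2 * (n : ℝ) - 1) * ((n : ℝ) - 2))) * (y x) ^ (-(4 * (n : ℝ) - 2)))) :
    deriv scal a = 0 ∧ iteratedDeriv 2 scal a = 0 ∧ iteratedDeriv 3 scal a ≠ 0 := by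
  set ν : ℝ := (n : ℝ) with hν
  have hn3 : (3 : ℝ) ≤ ν := by rw [hν]; exact_mod_cast hn
  have h2n : (0 : ℝ) < 2 * ν - 1 := by linarith
  have h16n : (0 : ℝ) < (16 : ℝ) ^ n := by positivity
  have hb : (0 : ℝ) < 16 * ν / ((2 * ν - 1) * 16 ^ n) := by positivity
  have hapos : 0 < a := by rw [ha]; exact Real.rpow_pos_of_pos hb _
  have he : ν + 1 - 2 * ν ^ 2 ≠ 0 := by nlinarith
  have haPow : a ^ (ν + 1 - 2 * ν ^ 2) = 16 * ν / ((2 * ν - 1) * 16 ^ n) := by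
    rw [ha, ← Real.rpow_mul hb.le, one_div, inv_mul_cancel₀ he, Real.rpow_one]
  have hane : a ≠ 0 := hapos.ne'
  have hyv : ∀ x, y x = yv ν a x := fun x => by rw [hy x]; rfl
  have hycont : Continuous (yv ν a) := by unfold yv; continuity
  set S : Set ℝ := {x | 0 < x ∧ 0 < yv ν a x} with hSdef
  have hS : IsOpen S := (isOpen_lt continuous_const continuous_id).inter
      (isOpen_lt continuous_const hycont)
  have hya : yv ν a a = a / 2 := by simp only [yv]; ring
  have haS : a ∈ S := ⟨hapos, by rw [hya]; positivity⟩
  have hGeq : ∀ x ∈ S, scal x = (2 * ν - 1) * (Pf ν a x - Rf ν a x) := by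
    intro x hx
    obtain ⟨hx0, hy0⟩ := hx
    rw [hscal x]
    simp only [Pf, Rf, hyv]
    rw [Real.rpow_def_of_pos hx0, Real.rpow_def_of_pos hy0, ← Real.exp_add]
  have hDscal : ∀ x ∈ S, HasDerivAt scal (F1 ν a x) x := by
    intro x hx
    have hG : HasDerivAt (fun t => (2 * ν - 1) * (Pf ν a t - Rf ν a t)) (F1 ν a x) x := by
      have h := ((Pf_hasDerivAt ν a x hx.1.ne' hx.2.ne').sub
        (Rf_hasDerivAt ν a x hx.1.ne' hx.2.ne')).const_mul (2 * ν - 1)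
      exact h
    exact hG.congr_of_eventuallyEq
      (Filter.eventuallyEq_of_mem (hS.mem_nhds hx) (fun t ht => hGeq t ht))
  have hDF1 : ∀ x ∈ S, HasDerivAt (F1 ν a) (F2 ν a x) x := by
    intro x hx
    have hP := P1_hasDerivAt ν a x hx.1.ne' hx.2.ne'
    have hR := Rf_hasDerivAt ν a x hx.1.ne' hx.2.ne'
    have hL := Lf_hasDerivAt ν a x hx.1.ne' hx.2.ne'
    have h := (hP.sub (hR.mul hL)).const_mul (2 * ν - 1)
    refine h.congr_deriv ?_
    simp only [F2]; ring
  have hDF2 : ∀ x ∈ S, HasDerivAt (F2 ν a) (F3 ν a x) x := by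
    intro x hx
    have hP := P2_hasDerivAt ν a x hx.1.ne' hx.2.ne'
    have hR := Rf_hasDerivAt ν a x hx.1.ne' hx.2.ne'
    have hL := Lf_hasDerivAt ν a x hx.1.ne' hx.2.ne'
    have hL1 := L1_hasDerivAt ν a x hx.1.ne' hx.2.ne'
    have h := (hP.sub (hR.mul ((hL.pow 2).add hL1))).const_mul (2 * ν - 1)
    refine h.congr_deriv ?_
    simp only [F3, Pi.add_apply, Pi.pow_apply, Nat.cast_ofNat, Nat.reduceSub, pow_one]; push_cast; ring
  have hEq1 : Set.EqOn (deriv scal) (F1 ν a) S := fun x hx => (hDscal x hx).deriv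
  have hDds : ∀ x ∈ S, HasDerivAt (deriv scal) (F2 ν a x) x := fun x hx =>
    (hDF1 x hx).congr_of_eventuallyEq (Filter.eventuallyEq_of_mem (hS.mem_nhds hx) hEq1)
  have hEq2 : Set.EqOn (deriv (deriv scal)) (F2 ν a) S := fun x hx => (hDds x hx).deriv
  have hDdds : HasDerivAt (deriv (deriv scal)) (F3 ν a a) a :=
    (hDF2 a haS).congr_of_eventuallyEq (Filter.eventuallyEq_of_mem (hS.mem_nhds haS) hEq2)
  have hLa : Lf ν a a = 0 := by
    simp only [Lf]; rw [hya]; field_simp; ring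
  have h2d : (2 : ℝ) ^ (4 * ν - 2) = (16 : ℝ) ^ n / 4 := by
    have hle : 2 ≤ 4 * n := by omega
    have h1 : ((4 * n - 2 : ℕ) : ℝ) = 4 * ν - 2 := by
      push_cast [hle]; ring
    rw [← h1, Real.rpow_natCast]
    have h2 : (16 : ℝ) ^ n = 2 ^ (4 * n) := by
      rw [show (16 : ℝ) = 2 ^ 4 by norm_num, ← pow_mul]
    have h3 : 4 * n = (4 * n - 2) + 2 := by omega
    rw [h2, h3, pow_add]
    norm_num
  have hRa : Rf ν a a = 4 * ν / ((2 * ν - 1) * a) := by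
    have hrw : Rf ν a a = a ^ (-((2 * ν - 1) * (ν - 2))) * (a / 2) ^ (-(4 * ν - 2)) := by
      simp only [Rf]
      rw [hya, Real.rpow_def_of_pos hapos,
        Real.rpow_def_of_pos (by positivity : (0 : ℝ) < a / 2), ← Real.exp_add]
    have hsplit : (a / 2) ^ (-(4 * ν - 2)) = a ^ (-(4 * ν - 2)) * (2 : ℝ) ^ (4 * ν - 2) := by
      rw [Real.div_rpow hapos.le (by norm_num : (0 : ℝ) ≤ 2),
        Real.rpow_neg (by norm_num : (0 : ℝ) ≤ 2), div_eq_mul_inv, inv_inv]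
    have hmain : a ^ (-((2 * ν - 1) * (ν - 2))) * a ^ (-(4 * ν - 2))
        = (16 * ν / ((2 * ν - 1) * 16 ^ n)) * a⁻¹ := by
      rw [← Real.rpow_add hapos]
      rw [show -((2 * ν - 1) * (ν - 2)) + -(4 * ν - 2) = (ν + 1 - 2 * ν ^ 2) + (-1) by ring]
      rw [Real.rpow_add hapos, haPow, Real.rpow_neg_one]
    rw [hrw, hsplit, ← mul_assoc, hmain, h2d]
    field_simp
    ring
  have hF1a : F1 ν a a = 0 := by
    simp only [F1, P1]
    rw [hLa, mul_zero, sub_zero, hya]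
    field_simp
    ring
  have hF2a : F2 ν a a = 0 := by
    simp only [F2, P2, L1]
    rw [hLa, hRa, hya]
    field_simp
    ring
  have hF3a : F3 ν a a = -(2 * (2 * ν - 1) * ν ^ 2 * (ν - 1) * (ν - 2)) / a ^ 4 := by
    simp only [F3, P3, L2, L1]
    rw [hLa, hRa, hya]
    field_simp
    ring
  have hF3ne : F3 ν a a ≠ 0 := by
    rw [hF3a]
    have hν0 : (0 : ℝ) < ν := by linarith
    have h1 : (0 : ℝ) < ν - 1 := by linarith
    have h2 : (0 : ℝ) < ν - 2 := by linarith
    have hpos : 0 < 2 * (2 * ν - 1) * ν ^ 2 * (ν - 1) * (ν - 2) :=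
      mul_pos (mul_pos (mul_pos (mul_pos two_pos h2n) (pow_pos hν0 2)) h1) h2
    exact (div_neg_of_neg_of_pos (neg_lt_zero.mpr hpos) (pow_pos hapos 4)).ne
  refine ⟨(hDscal a haS).deriv.trans hF1a, ?_, ?_⟩
  · rw [show (2 : ℕ) = 1 + 1 from rfl, iteratedDeriv_succ, iteratedDeriv_one]
    exact (hDds a haS).deriv.trans hF2a
  · rw [show (3 : ℕ) = 1 + 1 + 1 from rfl, iteratedDeriv_succ, iteratedDeriv_succ,
      iteratedDeriv_one, hDdds.deriv]
    exact hF3ne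
end

section
/- Fix an integer n ≥ 3, set a = (16n/((2n−1)·16ⁿ))^{1/(n+1−2n²)} and y(x) = −((n−2)/4)x + (n/4)a, and define scal(x) = (2n−1)( 4(n−1)(n−2)/x + 8(n−1)/y(x) − (n−2)x/y(x)² − x^{−(2n−1)(n−2)} y(x)^{−(4n−2)} ) on the interval where x > 0 and y(x) > 0. Then scal does not have a local maximum at x = a and does not have a local minimum at x = a. -/
set_option maxHeartbeats 1000000 in
/-- Along the curve of unit-volume `SU(2n−1)`-invariant metrics on `SU(2n)/Sp(n)` with
`a = (16n/((2n−1)16ⁿ))^{1/(n+1−2n²)}` and `y(x) = −((n−2)/4)x + (n/4)a`, the scalar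
curvature `scal(x)` has neither a local maximum nor a local minimum at `x = a`. -/
theorem scal_SU2n_Spn_not_localMax (n : ℕ) (hn : 3 ≤ n) (a : ℝ)
    (ha : a = (16 * (n : ℝ) / ((2 * (n : ℝ) - 1) * 16 ^ n))
      ^ (1 / ((n : ℝ) + 1 - 2 * (n : ℝ) ^ 2)))
    (y scal : ℝ → ℝ)
    (hy : ∀ x : ℝ, y x = -(((n : ℝ) - 2) / 4) * x + ((n : ℝ) / 4) * a)
    (hscal : ∀ x : ℝ, scal x = (2 * (n : ℝ) - 1) *
      (4 * ((n : ℝ) - 1) * ((n : ℝ) - 2) / x + 8 * ((n : ℝ) - 1) / y x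
        - ((n : ℝ) - 2) * x / (y x) ^ 2
        - x ^ (-((2 * (n : ℝ) - 1) * ((n : ℝ) - 2))) * (y x) ^ (-(4 * (n : ℝ) - 2)))) :
    ¬ IsLocalMax scal a ∧ ¬ IsLocalMin scal a := by
  have hm : (3:ℝ) ≤ (n:ℝ) := by exact_mod_cast hn
  set m : ℝ := (n:ℝ) with hmdef
  have hm0 : (0:ℝ) < m := by linarith
  have h2m : (0:ℝ) < 2*m - 1 := by linarith
  have hm2 : (0:ℝ) < m - 2 := by linarith
  have h2 : (0:ℝ) < 2 := two_pos
  have hbase : (0:ℝ) < 16 * m / ((2*m - 1) * 16 ^ n) := by positivity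
  have ha0 : 0 < a := by rw [ha]; exact Real.rpow_pos_of_pos hbase _
  have hane : a ≠ 0 := ne_of_gt ha0
  have he : m + 1 - 2*m^2 ≠ 0 := by nlinarith
  have key : a ^ (m + 1 - 2*m^2) = 16*m/((2*m-1)*16^n) := by
    rw [ha, ← Real.rpow_mul hbase.le, one_div, inv_mul_cancel₀ he, Real.rpow_one]
  set p : ℝ := -((2 * m - 1) * (m - 2)) with hp
  set q : ℝ := -(4 * m - 2) with hq
  have h16 : (16:ℝ)^n = (2:ℝ) ^ (4*m) := by
    have h1 : (16:ℝ)^n = (2:ℝ)^(4*n) := by rw [pow_mul]; norm_num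
    rw [h1, ← Real.rpow_natCast 2 (4*n)]
    congr 1
    push_cast
    ring
  have hq1 : ((2:ℝ) ^ (q-1))⁻¹ = (2:ℝ) ^ (4*m) / 2 := by
    rw [← Real.rpow_neg h2.le]
    have h3 : -(q-1) = 4*m - 1 := by rw [hq]; ring
    rw [h3, Real.rpow_sub h2, Real.rpow_one]
  have e2 : a ^ (p-1) * a ^ (q-1) = a ^ (m+1-2*m^2) / a^3 := by
    rw [← Real.rpow_add ha0]
    have h4 : p - 1 + (q - 1) = (m+1-2*m^2) - 3 := by rw [hp, hq]; ring
    have h5 : a ^ (3:ℝ) = a ^ (3:ℕ) := by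
      rw [← Real.rpow_natCast a 3]; norm_num
    rw [h4, Real.rpow_sub ha0, h5]
  have h2pow : (0:ℝ) < (2:ℝ) ^ (4*m) := Real.rpow_pos_of_pos h2 _
  have hR0 : a ^ (p-1) * (a/2) ^ (q-1) = 8*m/((2*m-1)*a^3) := by
    rw [Real.div_rpow ha0.le h2.le, div_eq_mul_inv, ← mul_assoc, e2, key, h16, hq1]
    field_simp
    ring
  -- main objects
  set K : ℝ → ℝ := fun x => (2*m-1)*(m/4) * (x ^ (p-1) * y x ^ (q-1)) with hK
  set Mq : ℝ → ℝ := fun x =>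
    m^2/16 * ((m-2)*(m-5)*x^2 - 2*a*(m-1)*(m-3)*x + a^2*m*(m-1)) with hMq
  set H : ℝ → ℝ := fun x => Mq x / (x^2 * (y x)^3) - K x with hHdef
  have hyd : ∀ x : ℝ, HasDerivAt y (-((m-2)/4)) x := by
    intro x
    have h1 : HasDerivAt (fun t : ℝ => -((m - 2) / 4) * t + m / 4 * a) (-((m-2)/4)) x := by
      simpa using ((hasDerivAt_id x).const_mul (-((m-2)/4))).add_const (m/4*a)
    have h2 : (fun t : ℝ => -((m - 2) / 4) * t + m / 4 * a) = y := (funext hy).symm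
    rwa [h2] at h1
  have hscaleq : scal = fun x => (2 * m - 1) *
      (4 * (m - 1) * (m - 2) / x + 8 * (m - 1) / y x
        - (m - 2) * x / (y x) ^ 2 - x ^ p * (y x) ^ q) := funext hscal
  have hscald : ∀ x : ℝ, 0 < x → 0 < y x →
      HasDerivAt scal ((2*m-1) * ((m-2) * ((x - a) * H x))) x := by
    intro x hx hyx
    have hxne : x ≠ 0 := ne_of_gt hx
    have hyne : y x ≠ 0 := ne_of_gt hyx
    have d1 := (hasDerivAt_const x (4*(m-1)*(m-2))).div (hasDerivAt_id x) hxne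
    have d2 := (hasDerivAt_const x (8*(m-1))).div (hyd x) hyne
    have d3 := ((hasDerivAt_id x).const_mul (m-2)).div ((hyd x).pow 2)
      (pow_ne_zero 2 hyne)
    have d4 := (Real.hasDerivAt_rpow_const (p := p) (Or.inl hxne)).mul
      ((hyd x).rpow_const (p := q) (Or.inl hyne))
    have D : HasDerivAt scal ((2*m-1) * ((0 * x - 4*(m-1)*(m-2) * 1) / x ^ 2
        + (0 * y x - 8*(m-1) * (-((m-2)/4))) / y x ^ 2
        - ((m-2) * 1 * y x ^ 2 - (m-2) * x * (((2:ℕ):ℝ) * y x ^ (2-1) * (-((m-2)/4)))) / (y x ^ 2) ^ 2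
        - (p * x ^ (p-1) * y x ^ q + x ^ p * (-((m-2)/4) * q * y x ^ (q-1))))) x := by
      rw [hscaleq]
      exact (((d1.add d2).sub d3).sub d4).const_mul (2*m-1)
    have hyx2 : y x = (m*a - (m-2)*x)/4 := by rw [hy x]; ring
    have hyne' : m*a - (m-2)*x ≠ 0 := by
      intro h0
      apply hyne
      rw [hyx2, h0]
      norm_num
    have hxp : x ^ p = x ^ (p-1) * x := by
      rw [← Real.rpow_add_one hxne (p-1)]
      congr 1
      ring
    have hyq : y x ^ q = y x ^ (q-1) * y x := by
      rw [← Real.rpow_add_one hyne (q-1)]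
      congr 1
      ring
    have hval : (2*m-1) * ((0 * x - 4*(m-1)*(m-2) * 1) / x ^ 2
        + (0 * y x - 8*(m-1) * (-((m-2)/4))) / y x ^ 2
        - ((m-2) * 1 * y x ^ 2 - (m-2) * x * (((2:ℕ):ℝ) * y x ^ (2-1) * (-((m-2)/4)))) / (y x ^ 2) ^ 2
        - (p * x ^ (p-1) * y x ^ q + x ^ p * (-((m-2)/4) * q * y x ^ (q-1))))
        = (2*m-1) * ((m-2) * ((x - a) * H x)) := by
      simp only [hHdef, hK, hMq]
      rw [hxp, hyq, hyx2]
      have hyne'' : m*a - x*(m-2) ≠ 0 := by rw [mul_comm x]; exact hyne'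
      field_simp
      ring
    rw [← hval]
    exact D
  -- facts at the point a
  have hya : y a = a/2 := by rw [hy a]; ring
  have hya0 : (0:ℝ) < a/2 := by linarith
  have hyane : y a ≠ 0 := by rw [hya]; exact ne_of_gt hya0
  have hH0 : H a = 0 := by
    simp only [hHdef, hK, hMq]
    rw [hya, mul_comm ((2*m-1)*(m/4)) _, hR0]
    have h2m' : m*2-1 ≠ 0 := ne_of_gt (by linarith)
    field_simp
    ring
  have hgpos : (0:ℝ) < a^2 * (y a)^3 := by
    rw [hya]; exact mul_pos (pow_pos ha0 2) (pow_pos hya0 3)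
  have hHd : HasDerivAt H (-(m^2*(m-1)/a^4)) a := by
    have dM : HasDerivAt Mq (m^2/16 * ((m-2)*(m-5) * (((2:ℕ):ℝ) * a ^ (2-1))
        - 2*a*(m-1)*(m-3) * 1 + 0)) a := by
      rw [hMq]
      exact ((((hasDerivAt_pow 2 a).const_mul ((m-2)*(m-5))).sub
        ((hasDerivAt_id a).const_mul (2*a*(m-1)*(m-3)))).add
        (hasDerivAt_const a (a^2*m*(m-1)))).const_mul (m^2/16)
    have dg : HasDerivAt (fun x : ℝ => x^2 * (y x)^3)
        (((2:ℕ):ℝ) * a ^ (2-1) * (y a)^3 + a^2 * (((3:ℕ):ℝ) * y a ^ (3-1) * (-((m-2)/4)))) a :=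
      (hasDerivAt_pow 2 a).mul ((hyd a).pow 3)
    have dKa : HasDerivAt K ((2*m-1)*(m/4) * ((p-1) * a ^ (p-1-1) * y a ^ (q-1)
        + a ^ (p-1) * (-((m-2)/4) * (q-1) * y a ^ (q-1-1)))) a := by
      rw [hK]
      exact ((Real.hasDerivAt_rpow_const (p := p-1) (Or.inl hane)).mul
        ((hyd a).rpow_const (p := q-1) (Or.inl hyane))).const_mul ((2*m-1)*(m/4))
    have dR := dM.div dg hgpos.ne'
    have dH := dR.sub dKa
    have hHfun : H = fun x : ℝ => Mq x / (x^2 * (y x)^3) - K x := hHdef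
    rw [hHfun]
    refine dH.congr_deriv (Eq.symm ?_)
    rw [hya]
    have e1 : a ^ (p-1-1) = a ^ (p-1) / a := by
      rw [Real.rpow_sub ha0, Real.rpow_one]
    have e3 : (a/2 : ℝ) ^ (q-1-1) = (a/2) ^ (q-1) / (a/2) := by
      rw [Real.rpow_sub hya0, Real.rpow_one]
    have hB0 : (0:ℝ) < (a/2) ^ (q-1) := Real.rpow_pos_of_pos hya0 _
    have hA : a ^ (p-1) = (8*m/((2*m-1)*a^3)) / ((a/2) ^ (q-1)) :=
      (eq_div_iff hB0.ne').mpr hR0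
    rw [e1, e3, hA]
    obtain ⟨B, hB0', hBdef⟩ : ∃ B : ℝ, 0 < B ∧ (a/2 : ℝ) ^ (q-1) = B :=
      ⟨_, Real.rpow_pos_of_pos hya0 _, rfl⟩
    rw [hBdef]
    simp only [hMq]
    rw [hp, hq]
    have h2m' : m*2-1 ≠ 0 := ne_of_gt (by linarith)
    field_simp
    ring
  -- limit of slope is negative
  have hcneg : -(m^2*(m-1)/a^4) < 0 := by
    have h6 : 0 < m^2*(m-1)/a^4 := by
      apply div_pos
      · nlinarith
      · positivity
    linarith
  have hslope : ∀ᶠ x in nhdsWithin a {a}ᶜ, slope H a x < 0 :=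
    (hasDerivAt_iff_tendsto_slope.mp hHd).eventually_lt_const hcneg
  have hδ0 : 0 < a/(m-2) := div_pos ha0 hm2
  have hUe : ∀ᶠ x in nhds a, x ∈ Set.Ioo (a - a/(m-2)) (a + a/(m-2)) := by
    filter_upwards [Ioo_mem_nhds (show a - a/(m-2) < a by linarith)
      (show a < a + a/(m-2) by linarith)] with x hx
    exact hx
  have hcomb := hslope.and (hUe.filter_mono nhdsWithin_le_nhds)
  rw [eventually_nhdsWithin_iff] at hcomb
  obtain ⟨ε, hε, hball⟩ := Metric.eventually_nhds_iff.mp hcomb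
  have hdom : ∀ x : ℝ, x ∈ Set.Ioo (a - a/(m-2)) (a + a/(m-2)) → 0 < x ∧ 0 < y x := by
    intro x hx
    obtain ⟨h1, h2⟩ := hx
    have hcan : (m-2)*(a/(m-2)) = a := by field_simp
    constructor
    · have hle : a/(m-2) ≤ a := by
        rw [div_le_iff₀ hm2]
        nlinarith
      linarith
    · rw [hy x]
      nlinarith [mul_lt_mul_of_pos_left h2 hm2, hcan, ha0]
  have hSneg : ∀ x : ℝ, dist x a < ε → x ≠ a → deriv scal x < 0 := by
    intro x h1 h2
    obtain ⟨hs, hxIoo⟩ := hball h1 (Set.mem_compl_singleton_iff.mpr h2)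
    obtain ⟨hx0, hyx0⟩ := hdom x hxIoo
    rw [(hscald x hx0 hyx0).deriv]
    have hs' : H x / (x - a) < 0 := by
      rw [slope_def_field, hH0, sub_zero] at hs
      exact hs
    have h10 : (2*m-1)*((m-2)*((x-a)*H x)) = ((2*m-1)*(m-2))*((x-a)*H x) := by ring
    rcases div_neg_iff.mp hs' with ⟨hH1, hx1⟩ | ⟨hH1, hx1⟩
    · have h8 : (x - a) * H x < 0 := mul_neg_of_neg_of_pos hx1 hH1
      have h9 := mul_neg_of_pos_of_neg (mul_pos h2m hm2) h8
      linarith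
    · have h8 : (x - a) * H x < 0 := mul_neg_of_pos_of_neg hx1 hH1
      have h9 := mul_neg_of_pos_of_neg (mul_pos h2m hm2) h8
      linarith
  set r : ℝ := min (ε/2) (a/(m-2)/2) with hrdef
  have hr0 : 0 < r := lt_min (by linarith) (by linarith)
  have hrε : r < ε := lt_of_le_of_lt (min_le_left _ _) (by linarith)
  have hrδ : r < a/(m-2) := lt_of_le_of_lt (min_le_right _ _) (by linarith)
  have hmem : ∀ x : ℝ, dist x a ≤ r → (0 < x ∧ 0 < y x) := by
    intro x hx
    rw [Real.dist_eq] at hx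
    obtain ⟨hl, hu⟩ := abs_le.mp hx
    exact hdom x ⟨by linarith, by linarith⟩
  have hcontAt : ∀ x : ℝ, dist x a ≤ r → ContinuousAt scal x := fun x hx =>
    (hscald x (hmem x hx).1 (hmem x hx).2).continuousAt
  have hanti1 : StrictAntiOn scal (Set.Icc a (a+r)) := by
    apply strictAntiOn_of_deriv_neg (convex_Icc _ _)
    · intro x hx
      obtain ⟨h1, h2⟩ := hx
      exact (hcontAt x (by rw [Real.dist_eq, abs_le]; constructor <;> linarith)).continuousWithinAt
    · intro x hx
      rw [interior_Icc] at hx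
      obtain ⟨h1, h2⟩ := hx
      exact hSneg x (by rw [Real.dist_eq, abs_lt]; constructor <;> linarith) h1.ne'
  have hanti2 : StrictAntiOn scal (Set.Icc (a-r) a) := by
    apply strictAntiOn_of_deriv_neg (convex_Icc _ _)
    · intro x hx
      obtain ⟨h1, h2⟩ := hx
      exact (hcontAt x (by rw [Real.dist_eq, abs_le]; constructor <;> linarith)).continuousWithinAt
    · intro x hx
      rw [interior_Icc] at hx
      obtain ⟨h1, h2⟩ := hx
      exact hSneg x (by rw [Real.dist_eq, abs_lt]; constructor <;> linarith) h2.ne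
  constructor
  · intro hmax
    obtain ⟨ε₂, hε₂, hb2⟩ := Metric.eventually_nhds_iff.mp
      (hmax : ∀ᶠ x in nhds a, scal x ≤ scal a)
    have h5 := lt_min hr0 hε₂
    have h6 := min_le_left r ε₂
    have h7 := min_le_right r ε₂
    set t : ℝ := min r ε₂ / 2 with htdef
    have hgt : scal a < scal (a - t) := by
      apply hanti2 ⟨by linarith, by linarith⟩ ⟨by linarith, by linarith⟩ (by linarith)
    have hle : scal (a - t) ≤ scal a :=
      hb2 (by rw [Real.dist_eq, abs_lt]; constructor <;> linarith)
    linarith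
  · intro hmin
    obtain ⟨ε₂, hε₂, hb2⟩ := Metric.eventually_nhds_iff.mp
      (hmin : ∀ᶠ x in nhds a, scal a ≤ scal x)
    have h5 := lt_min hr0 hε₂
    have h6 := min_le_left r ε₂
    have h7 := min_le_right r ε₂
    set t : ℝ := min r ε₂ / 2 with htdef
    have hlt : scal (a + t) < scal a := by
      apply hanti1 ⟨by linarith, by linarith⟩ ⟨by linarith, by linarith⟩ (by linarith)
    have hge : scal a ≤ scal (a + t) :=
      hb2 (by rw [Real.dist_eq, abs_lt]; constructor <;> linarith)
    linarith
end

section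
/- Fix an integer n ≥ 3 and set a = (16n/((2n−1)·16ⁿ))^{1/(n+1−2n²)}. Let S : ℝ² → ℝ be defined on {x > 0, y > 0} by S(x,y) = (2n−1)( 4(n−1)(n−2)/x + 8(n−1)/y − (n−2)x/y² − x^{−(2n−1)(n−2)} y^{−(4n−2)} ). Then the kernel of the Hessian of S at the point (a, a/2) is one-dimensional, spanned by the vector (1, −(n−2)/4); that is, for v ∈ ℝ², the second Fréchet derivative of S at (a, a/2) satisfies D²S(a,a/2)(v,w) = 0 for all w ∈ ℝ² if and only if v is a scalar multiple of (1, −(n−2)/4). -/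
set_option maxHeartbeats 2000000

private lemma hdfst {f : ℝ → ℝ} {f' : ℝ} {p : ℝ × ℝ} (h : HasDerivAt f f' p.1) :
    HasFDerivAt (fun q : ℝ × ℝ => f q.1) (f' • ContinuousLinearMap.fst ℝ ℝ ℝ) p :=
  h.comp_hasFDerivAt p hasFDerivAt_fst

private lemma hdsnd {f : ℝ → ℝ} {f' : ℝ} {p : ℝ × ℝ} (h : HasDerivAt f f' p.2) :
    HasFDerivAt (fun q : ℝ × ℝ => f q.2) (f' • ContinuousLinearMap.snd ℝ ℝ ℝ) p :=
  h.comp_hasFDerivAt p hasFDerivAt_snd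

private lemma LRP (s t : ℝ) {p : ℝ × ℝ} (h1 : p.1 ≠ 0) (h2 : p.2 ≠ 0) :
    HasFDerivAt (fun q : ℝ × ℝ => q.1 ^ s * q.2 ^ t)
      (p.1 ^ s • ((t * p.2 ^ (t - 1)) • ContinuousLinearMap.snd ℝ ℝ ℝ) +
       p.2 ^ t • ((s * p.1 ^ (s - 1)) • ContinuousLinearMap.fst ℝ ℝ ℝ)) p :=
  (hdfst (Real.hasDerivAt_rpow_const (Or.inl h1))).mul
    (hdsnd (Real.hasDerivAt_rpow_const (Or.inl h2)))

private lemma hasS (c A B m α β : ℝ) {p : ℝ × ℝ} (h1 : 0 < p.1) (h2 : 0 < p.2) :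
    HasFDerivAt (fun q : ℝ × ℝ => c * (A / q.1 + B / q.2 - m * q.1 / q.2 ^ 2
        - q.1 ^ (-α) * q.2 ^ (-β)))
      ((c * (-(A / p.1 ^ 2) - m / p.2 ^ 2 + α * (p.1 ^ (-α - 1) * p.2 ^ (-β)))) •
          ContinuousLinearMap.fst ℝ ℝ ℝ +
        (c * (-(B / p.2 ^ 2) + 2 * m * p.1 / p.2 ^ 3 + β * (p.1 ^ (-α) * p.2 ^ (-β - 1)))) •
          ContinuousLinearMap.snd ℝ ℝ ℝ) p := by
  have h1' := h1.ne'
  have h2' := h2.ne'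
  simp only [div_eq_mul_inv]
  have t1 := (hdfst (hasDerivAt_inv h1')).const_mul A
  have t2 := (hdsnd (hasDerivAt_inv h2')).const_mul B
  have t3 := (hasFDerivAt_fst.const_mul m).mul
    (hdsnd ((hasDerivAt_pow 2 p.2).inv (pow_ne_zero 2 h2')))
  have t4 := LRP (-α) (-β) h1' h2'
  have H := (((t1.add t2).sub t3).sub t4).const_mul c
  refine H.congr_fderiv ?_
  refine ContinuousLinearMap.ext fun w => ?_
  simp only [ContinuousLinearMap.add_apply, ContinuousLinearMap.smul_apply,
    ContinuousLinearMap.coe_fst', ContinuousLinearMap.coe_snd',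
    ContinuousLinearMap.coe_sub', Pi.sub_apply, smul_eq_mul, Pi.inv_apply]
  have e1 : p.1 ^ (-α - 1) = p.1 ^ (-α) * p.1⁻¹ := by
    rw [Real.rpow_sub h1, Real.rpow_one, div_eq_mul_inv]
  have e2 : p.2 ^ (-β - 1) = p.2 ^ (-β) * p.2⁻¹ := by
    rw [Real.rpow_sub h2, Real.rpow_one, div_eq_mul_inv]
  rw [e1, e2]
  field_simp
  ring

private lemma hasSx (c A m α β : ℝ) {p : ℝ × ℝ} (h1 : 0 < p.1) (h2 : 0 < p.2) :
    HasFDerivAt (fun q : ℝ × ℝ =>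
        c * (-(A / q.1 ^ 2) - m / q.2 ^ 2 + α * (q.1 ^ (-α - 1) * q.2 ^ (-β))))
      ((c * (2 * A / p.1 ^ 3 + α * ((-α - 1) * (p.1 ^ (-α - 1 - 1) * p.2 ^ (-β))))) •
          ContinuousLinearMap.fst ℝ ℝ ℝ +
        (c * (2 * m / p.2 ^ 3 + α * (-β * (p.1 ^ (-α - 1) * p.2 ^ (-β - 1))))) •
          ContinuousLinearMap.snd ℝ ℝ ℝ) p := by
  have h1' := h1.ne'
  have h2' := h2.ne'
  simp only [div_eq_mul_inv]
  have u1 := ((hdfst ((hasDerivAt_pow 2 p.1).inv (pow_ne_zero 2 h1'))).const_mul A).neg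
  have u2 := (hdsnd ((hasDerivAt_pow 2 p.2).inv (pow_ne_zero 2 h2'))).const_mul m
  have u3 := (LRP (-α - 1) (-β) h1' h2').const_mul α
  have H := ((u1.sub u2).add u3).const_mul c
  refine H.congr_fderiv ?_
  refine ContinuousLinearMap.ext fun w => ?_
  simp only [ContinuousLinearMap.add_apply, ContinuousLinearMap.smul_apply,
    ContinuousLinearMap.coe_fst', ContinuousLinearMap.coe_snd',
    ContinuousLinearMap.coe_sub', Pi.sub_apply, ContinuousLinearMap.neg_apply,
    smul_eq_mul]
  field_simp
  ring

private lemma hasSy (c B m α β : ℝ) {p : ℝ × ℝ} (h1 : 0 < p.1) (h2 : 0 < p.2) :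
    HasFDerivAt (fun q : ℝ × ℝ =>
        c * (-(B / q.2 ^ 2) + 2 * m * q.1 / q.2 ^ 3 + β * (q.1 ^ (-α) * q.2 ^ (-β - 1))))
      ((c * (2 * m / p.2 ^ 3 + β * (-α * (p.1 ^ (-α - 1) * p.2 ^ (-β - 1))))) •
          ContinuousLinearMap.fst ℝ ℝ ℝ +
        (c * (2 * B / p.2 ^ 3 - 6 * m * p.1 / p.2 ^ 4
            + β * ((-β - 1) * (p.1 ^ (-α) * p.2 ^ (-β - 1 - 1))))) •
          ContinuousLinearMap.snd ℝ ℝ ℝ) p := by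
  have h1' := h1.ne'
  have h2' := h2.ne'
  simp only [div_eq_mul_inv]
  have v1 := ((hdsnd ((hasDerivAt_pow 2 p.2).inv (pow_ne_zero 2 h2'))).const_mul B).neg
  have v2 := (hasFDerivAt_fst.const_mul (2 * m)).mul
    (hdsnd ((hasDerivAt_pow 3 p.2).inv (pow_ne_zero 3 h2')))
  have v3 := (LRP (-α) (-β - 1) h1' h2').const_mul β
  have H := ((v1.add v2).add v3).const_mul c
  refine H.congr_fderiv ?_
  refine ContinuousLinearMap.ext fun w => ?_
  simp only [ContinuousLinearMap.add_apply, ContinuousLinearMap.smul_apply,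
    ContinuousLinearMap.coe_fst', ContinuousLinearMap.coe_snd',
    ContinuousLinearMap.coe_sub', Pi.sub_apply, ContinuousLinearMap.neg_apply,
    smul_eq_mul, Pi.inv_apply]
  field_simp
  ring

private lemma mainlem (N a : ℝ) (hN : 3 ≤ N) (ha0 : 0 < a)
    (hPQ : a ^ (-((2 * N - 1) * (N - 2))) * (a / 2) ^ (-(4 * N - 2))
      = 4 * N / ((2 * N - 1) * a)) :
    ∀ v : ℝ × ℝ,
      (∀ w : ℝ × ℝ, fderiv ℝ (fderiv ℝ (fun p : ℝ × ℝ => (2 * N - 1) *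
        (4 * (N - 1) * (N - 2) / p.1 + 8 * (N - 1) / p.2
          - (N - 2) * p.1 / p.2 ^ 2
          - p.1 ^ (-((2 * N - 1) * (N - 2))) * p.2 ^ (-(4 * N - 2))))) (a, a / 2) v w = 0) ↔
        ∃ c : ℝ, v = c • ((1, -((N - 2) / 4)) : ℝ × ℝ) := by
  intro v
  have hb0 : (0:ℝ) < a / 2 := by linarith
  have h1 : (0:ℝ) < ((a, a / 2) : ℝ × ℝ).1 := ha0
  have h2 : (0:ℝ) < ((a, a / 2) : ℝ × ℝ).2 := hb0
  have hU : {q : ℝ × ℝ | 0 < q.1 ∧ 0 < q.2} ∈ nhds ((a, a / 2) : ℝ × ℝ) := by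
    have hop : IsOpen {q : ℝ × ℝ | 0 < q.1 ∧ 0 < q.2} :=
      (isOpen_lt continuous_const continuous_fst).inter
        (isOpen_lt continuous_const continuous_snd)
    exact hop.mem_nhds ⟨ha0, hb0⟩
  have hEv : fderiv ℝ (fun p : ℝ × ℝ => (2 * N - 1) *
        (4 * (N - 1) * (N - 2) / p.1 + 8 * (N - 1) / p.2
          - (N - 2) * p.1 / p.2 ^ 2
          - p.1 ^ (-((2 * N - 1) * (N - 2))) * p.2 ^ (-(4 * N - 2))))
      =ᶠ[nhds ((a, a / 2) : ℝ × ℝ)] (fun q : ℝ × ℝ =>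
        ((2 * N - 1) * (-(4 * (N - 1) * (N - 2) / q.1 ^ 2) - (N - 2) / q.2 ^ 2
            + (2 * N - 1) * (N - 2) *
              (q.1 ^ (-((2 * N - 1) * (N - 2)) - 1) * q.2 ^ (-(4 * N - 2))))) •
          ContinuousLinearMap.fst ℝ ℝ ℝ +
        ((2 * N - 1) * (-(8 * (N - 1) / q.2 ^ 2) + 2 * (N - 2) * q.1 / q.2 ^ 3
            + (4 * N - 2) *
              (q.1 ^ (-((2 * N - 1) * (N - 2))) * q.2 ^ (-(4 * N - 2) - 1)))) •
          ContinuousLinearMap.snd ℝ ℝ ℝ) := by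
    filter_upwards [hU] with q hq
    exact (hasS (2 * N - 1) (4 * (N - 1) * (N - 2)) (8 * (N - 1)) (N - 2)
      ((2 * N - 1) * (N - 2)) (4 * N - 2) hq.1 hq.2).fderiv
  have hM : HasFDerivAt (fun q : ℝ × ℝ =>
        ((2 * N - 1) * (-(4 * (N - 1) * (N - 2) / q.1 ^ 2) - (N - 2) / q.2 ^ 2
            + (2 * N - 1) * (N - 2) *
              (q.1 ^ (-((2 * N - 1) * (N - 2)) - 1) * q.2 ^ (-(4 * N - 2))))) •
          ContinuousLinearMap.fst ℝ ℝ ℝ +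
        ((2 * N - 1) * (-(8 * (N - 1) / q.2 ^ 2) + 2 * (N - 2) * q.1 / q.2 ^ 3
            + (4 * N - 2) *
              (q.1 ^ (-((2 * N - 1) * (N - 2))) * q.2 ^ (-(4 * N - 2) - 1)))) •
          ContinuousLinearMap.snd ℝ ℝ ℝ)
      ((((2 * N - 1) * (2 * (4 * (N - 1) * (N - 2)) / a ^ 3
            + (2 * N - 1) * (N - 2) * ((-((2 * N - 1) * (N - 2)) - 1) *
              (a ^ (-((2 * N - 1) * (N - 2)) - 1 - 1) * (a / 2) ^ (-(4 * N - 2)))))) •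
          ContinuousLinearMap.fst ℝ ℝ ℝ +
        ((2 * N - 1) * (2 * (N - 2) / (a / 2) ^ 3
            + (2 * N - 1) * (N - 2) * (-(4 * N - 2) *
              (a ^ (-((2 * N - 1) * (N - 2)) - 1) * (a / 2) ^ (-(4 * N - 2) - 1))))) •
          ContinuousLinearMap.snd ℝ ℝ ℝ).smulRight (ContinuousLinearMap.fst ℝ ℝ ℝ) +
       (((2 * N - 1) * (2 * (N - 2) / (a / 2) ^ 3
            + (4 * N - 2) * (-((2 * N - 1) * (N - 2)) *
              (a ^ (-((2 * N - 1) * (N - 2)) - 1) * (a / 2) ^ (-(4 * N - 2) - 1))))) •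
          ContinuousLinearMap.fst ℝ ℝ ℝ +
        ((2 * N - 1) * (2 * (8 * (N - 1)) / (a / 2) ^ 3 - 6 * (N - 2) * a / (a / 2) ^ 4
            + (4 * N - 2) * ((-(4 * N - 2) - 1) *
              (a ^ (-((2 * N - 1) * (N - 2))) * (a / 2) ^ (-(4 * N - 2) - 1 - 1))))) •
          ContinuousLinearMap.snd ℝ ℝ ℝ).smulRight (ContinuousLinearMap.snd ℝ ℝ ℝ))
      ((a, a / 2) : ℝ × ℝ) :=
    ((hasSx (2 * N - 1) (4 * (N - 1) * (N - 2)) (N - 2)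
        ((2 * N - 1) * (N - 2)) (4 * N - 2) h1 h2).smul_const
      (ContinuousLinearMap.fst ℝ ℝ ℝ)).add
    ((hasSy (2 * N - 1) (8 * (N - 1)) (N - 2)
        ((2 * N - 1) * (N - 2)) (4 * N - 2) h1 h2).smul_const
      (ContinuousLinearMap.snd ℝ ℝ ℝ))
  have hP : (0:ℝ) < a ^ (-((2 * N - 1) * (N - 2))) := Real.rpow_pos_of_pos ha0 _
  have E1 : a ^ (-((2 * N - 1) * (N - 2)) - 1) = a ^ (-((2 * N - 1) * (N - 2))) / a := by
    rw [Real.rpow_sub ha0, Real.rpow_one]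
  have E2 : a ^ (-((2 * N - 1) * (N - 2)) - 1 - 1)
      = a ^ (-((2 * N - 1) * (N - 2))) / a / a := by
    rw [Real.rpow_sub ha0, Real.rpow_one, E1]
  have E3 : (a / 2) ^ (-(4 * N - 2) - 1) = (a / 2) ^ (-(4 * N - 2)) / (a / 2) := by
    rw [Real.rpow_sub hb0, Real.rpow_one]
  have E4 : (a / 2) ^ (-(4 * N - 2) - 1 - 1)
      = (a / 2) ^ (-(4 * N - 2)) / (a / 2) / (a / 2) := by
    rw [Real.rpow_sub hb0, Real.rpow_one, E3]
  have EQ : (a / 2) ^ (-(4 * N - 2))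
      = 4 * N / ((2 * N - 1) * a) / a ^ (-((2 * N - 1) * (N - 2))) := by
    rw [eq_div_iff hP.ne', mul_comm]
    exact hPQ
  have hc0 : (2 * N - 1) ≠ 0 := by nlinarith
  have key2 : ∀ w : ℝ × ℝ, fderiv ℝ (fderiv ℝ (fun p : ℝ × ℝ => (2 * N - 1) *
        (4 * (N - 1) * (N - 2) / p.1 + 8 * (N - 1) / p.2
          - (N - 2) * p.1 / p.2 ^ 2
          - p.1 ^ (-((2 * N - 1) * (N - 2))) * p.2 ^ (-(4 * N - 2))))) (a, a / 2) v w
      = (-(4 * (2 * N - 1) * (N - 1) * (2 * N + 1)) / a ^ 3) *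
          ((N - 2) * v.1 + 4 * v.2) * ((N - 2) * w.1 + 4 * w.2) := by
    intro w
    rw [hEv.fderiv_eq, hM.fderiv]
    simp only [ContinuousLinearMap.add_apply, ContinuousLinearMap.smulRight_apply,
      ContinuousLinearMap.smul_apply, ContinuousLinearMap.coe_fst',
      ContinuousLinearMap.coe_snd', smul_eq_mul]
    rw [E2, E4, E1, E3, EQ]
    field_simp
    ring
  simp only [key2]
  constructor
  · intro h
    have hval := h ((N - 2, 4) : ℝ × ℝ)
    have hK : (-(4 * (2 * N - 1) * (N - 1) * (2 * N + 1)) / a ^ 3) ≠ 0 := by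
      have h3 : (0:ℝ) < 4 * (2 * N - 1) * (N - 1) * (2 * N + 1) := by nlinarith
      have := div_pos h3 (by positivity : (0:ℝ) < a ^ 3)
      intro hcon
      rw [neg_div] at hcon
      nlinarith [this]
    have hW : ((N - 2) * ((N - 2, 4) : ℝ × ℝ).1 + 4 * ((N - 2, 4) : ℝ × ℝ).2) ≠ 0 := by
      simp only
      nlinarith
    have hlin : (N - 2) * v.1 + 4 * v.2 = 0 := by
      rcases mul_eq_zero.mp hval with h' | h''
      · rcases mul_eq_zero.mp h' with hK0 | hl
        · exact absurd hK0 hK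
        · exact hl
      · exact absurd h'' hW
    refine ⟨v.1, ?_⟩
    have hv2 : v.2 = v.1 * -((N - 2) / 4) := by linear_combination (1/4 : ℝ) * hlin
    apply Prod.ext
    · simp
    · simpa using hv2
  · rintro ⟨k, rfl⟩ w
    simp only [Prod.smul_mk, smul_eq_mul]
    ring

/-- The kernel of the Hessian at `(a, a/2)` of the scalar curvature
`S(x,y) = (2n−1)(4(n−1)(n−2)/x + 8(n−1)/y − (n−2)x/y² − x^{−(2n−1)(n−2)}y^{−(4n−2)})`
of unit-volume `SU(2n−1)`-invariant metrics on `SU(2n)/Sp(n)` is one-dimensional,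
spanned by `(1, −(n−2)/4)`. -/
theorem hessian_kernel_SU2n_Spn (n : ℕ) (hn : 3 ≤ n) (a : ℝ)
    (ha : a = (16 * (n : ℝ) / ((2 * (n : ℝ) - 1) * 16 ^ n))
      ^ (1 / ((n : ℝ) + 1 - 2 * (n : ℝ) ^ 2)))
    (S : ℝ × ℝ → ℝ)
    (hS : ∀ p : ℝ × ℝ, S p = (2 * (n : ℝ) - 1) *
      (4 * ((n : ℝ) - 1) * ((n : ℝ) - 2) / p.1 + 8 * ((n : ℝ) - 1) / p.2
        - ((n : ℝ) - 2) * p.1 / p.2 ^ 2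
        - p.1 ^ (-((2 * (n : ℝ) - 1) * ((n : ℝ) - 2))) * p.2 ^ (-(4 * (n : ℝ) - 2)))) :
    ∀ v : ℝ × ℝ,
      (∀ w : ℝ × ℝ, fderiv ℝ (fderiv ℝ S) (a, a / 2) v w = 0) ↔
        ∃ c : ℝ, v = c • ((1, -(((n : ℝ) - 2) / 4)) : ℝ × ℝ) := by
  have hfun : S = (fun p : ℝ × ℝ => (2 * (n : ℝ) - 1) *
      (4 * ((n : ℝ) - 1) * ((n : ℝ) - 2) / p.1 + 8 * ((n : ℝ) - 1) / p.2
        - ((n : ℝ) - 2) * p.1 / p.2 ^ 2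
        - p.1 ^ (-((2 * (n : ℝ) - 1) * ((n : ℝ) - 2))) * p.2 ^ (-(4 * (n : ℝ) - 2)))) :=
    funext hS
  subst hfun
  have hN : (3:ℝ) ≤ (n:ℝ) := by exact_mod_cast hn
  have hc0 : (0:ℝ) < 2 * (n:ℝ) - 1 := by linarith
  have hbpos : (0:ℝ) < 16 * (n:ℝ) / ((2 * (n:ℝ) - 1) * 16 ^ n) :=
    div_pos (by linarith) (mul_pos hc0 (by positivity))
  have ha0 : 0 < a := by rw [ha]; exact Real.rpow_pos_of_pos hbpos _
  have he : ((n:ℝ) + 1 - 2 * (n:ℝ) ^ 2) ≠ 0 := by nlinarith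
  have hae : a ^ ((n:ℝ) + 1 - 2 * (n:ℝ) ^ 2)
      = 16 * (n:ℝ) / ((2 * (n:ℝ) - 1) * 16 ^ n) := by
    rw [ha, ← Real.rpow_mul hbpos.le, one_div_mul_cancel he, Real.rpow_one]
  have h2b : (2:ℝ) ^ (4 * (n:ℝ) - 2) = 16 ^ n / 4 := by
    rw [show (4 * (n:ℝ) - 2) = ((4 * n : ℕ) : ℝ) - ((2:ℕ) : ℝ) by push_cast; ring,
      Real.rpow_sub (by norm_num : (0:ℝ) < 2), Real.rpow_natCast, Real.rpow_natCast,
      show (2:ℝ) ^ (4 * n) = 16 ^ n from by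
        rw [show (16:ℝ) = 2 ^ (4:ℕ) by norm_num, ← pow_mul]]
    norm_num
  have hPQ : a ^ (-((2 * (n:ℝ) - 1) * ((n:ℝ) - 2))) * (a / 2) ^ (-(4 * (n:ℝ) - 2))
      = 4 * (n:ℝ) / ((2 * (n:ℝ) - 1) * a) := by
    rw [Real.div_rpow ha0.le (by norm_num : (0:ℝ) ≤ 2)]
    rw [div_eq_mul_inv, ← mul_assoc]
    rw [show a ^ (-((2 * (n:ℝ) - 1) * ((n:ℝ) - 2))) * a ^ (-(4 * (n:ℝ) - 2))
        = a ^ (((n:ℝ) + 1 - 2 * (n:ℝ) ^ 2) + (-1)) from by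
      rw [← Real.rpow_add ha0]; congr 1; ring]
    rw [Real.rpow_add ha0, hae, Real.rpow_neg_one]
    rw [Real.rpow_neg (by norm_num : (0:ℝ) ≤ 2), h2b, inv_inv]
    have h16 : (16:ℝ) ^ n ≠ 0 := by positivity
    field_simp
    ring
  exact mainlem (n:ℝ) a hN ha0 hPQ
end

section
/- Fix an integer n ≥ 4 and define g(x) = ( 4(n−1) + (n²−3n+2) x^{n/(n−2)} + (2−n) x^{−n/(n−2)} ) / (2x) for x > 0. Then g'(1) = 0, g''(1) = 0, and g'''(1) = 2n²(n−1)/(n−2)², which is nonzero; consequently g does not have a local maximum at x = 1 and does not have a local minimum at x = 1. -/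
open Real Filter Set Topology

/-- A three-term power function. -/
noncomputable def scalT (c₁ a₁ c₂ a₂ c₃ a₃ : ℝ) : ℝ → ℝ :=
  fun x => c₁ * x ^ a₁ + c₂ * x ^ a₂ + c₃ * x ^ a₃

lemma scalT_hasDerivAt (c₁ a₁ c₂ a₂ c₃ a₃ x : ℝ) (hx : 0 < x) :
    HasDerivAt (scalT c₁ a₁ c₂ a₂ c₃ a₃)
      (scalT (c₁*a₁) (a₁-1) (c₂*a₂) (a₂-1) (c₃*a₃) (a₃-1) x) x := by
  have h1 := (Real.hasDerivAt_rpow_const (x := x) (p := a₁) (Or.inl hx.ne')).const_mul c₁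
  have h2 := (Real.hasDerivAt_rpow_const (x := x) (p := a₂) (Or.inl hx.ne')).const_mul c₂
  have h3 := (Real.hasDerivAt_rpow_const (x := x) (p := a₃) (Or.inl hx.ne')).const_mul c₃
  have h := (h1.add h2).add h3
  refine h.congr_deriv ?_
  simp only [scalT]
  ring

set_option maxHeartbeats 2000000 in
/-- The scalar curvature
`g(x) = (4(n−1) + (n²−3n+2)x^{n/(n−2)} + (2−n)x^{−n/(n−2)})/(2x)` along the curve of
unit-volume `SO(2n)`-invariant metrics on `SO(2n)/Tⁿ` satisfies `g'(1) = 0`, `g''(1) = 0`,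
`g'''(1) = 2n²(n−1)/(n−2)² ≠ 0`; consequently `g` has neither a local maximum nor a
local minimum at `x = 1`. -/
theorem scal_SO2n_inflection (n : ℕ) (hn : 4 ≤ n) (g : ℝ → ℝ)
    (hg : ∀ x : ℝ, g x = (4 * ((n : ℝ) - 1)
      + ((n : ℝ) ^ 2 - 3 * (n : ℝ) + 2) * x ^ ((n : ℝ) / ((n : ℝ) - 2))
      + (2 - (n : ℝ)) * x ^ (-((n : ℝ) / ((n : ℝ) - 2)))) / (2 * x)) :
    deriv g 1 = 0 ∧ iteratedDeriv 2 g 1 = 0 ∧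
      iteratedDeriv 3 g 1 = 2 * (n : ℝ) ^ 2 * ((n : ℝ) - 1) / ((n : ℝ) - 2) ^ 2 ∧
      2 * (n : ℝ) ^ 2 * ((n : ℝ) - 1) / ((n : ℝ) - 2) ^ 2 ≠ 0 ∧
      ¬ IsLocalMax g 1 ∧ ¬ IsLocalMin g 1 := by
  have hN : (4:ℝ) ≤ (n:ℝ) := by exact_mod_cast hn
  have hN2 : (n:ℝ) - 2 ≠ 0 := by nlinarith
  have hN2' : (0:ℝ) < (n:ℝ) - 2 := by nlinarith
  set N : ℝ := (n:ℝ) with hNdef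
  set p : ℝ := N / (N - 2) with hp
  -- the three derived power functions
  set A : ℝ := 2 * (N - 1) with hA
  set B : ℝ := (N^2 - 3*N + 2) / 2 with hB
  set C : ℝ := (2 - N) / 2 with hC
  set h0 : ℝ → ℝ := scalT A (-1) B (p-1) C (-p-1) with hh0
  set h1 : ℝ → ℝ := scalT (A*(-1)) (-1-1) (B*(p-1)) (p-1-1) (C*(-p-1)) (-p-1-1) with hh1
  set h2 : ℝ → ℝ := scalT (A*(-1)*(-1-1)) (-1-1-1) (B*(p-1)*(p-1-1)) (p-1-1-1)
      (C*(-p-1)*(-p-1-1)) (-p-1-1-1) with hh2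
  set h3 : ℝ → ℝ := scalT (A*(-1)*(-1-1)*(-1-1-1)) (-1-1-1-1)
      (B*(p-1)*(p-1-1)*(p-1-1-1)) (p-1-1-1-1)
      (C*(-p-1)*(-p-1-1)*(-p-1-1-1)) (-p-1-1-1-1) with hh3
  have hD0 : ∀ x : ℝ, 0 < x → HasDerivAt h0 (h1 x) x := fun x hx => by
    have := scalT_hasDerivAt A (-1) B (p-1) C (-p-1) x hx
    convert this using 2 <;> ring
  have hD1 : ∀ x : ℝ, 0 < x → HasDerivAt h1 (h2 x) x := fun x hx => by
    have := scalT_hasDerivAt (A*(-1)) (-1-1) (B*(p-1)) (p-1-1) (C*(-p-1)) (-p-1-1) x hx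
    convert this using 2 <;> ring
  have hD2 : ∀ x : ℝ, 0 < x → HasDerivAt h2 (h3 x) x := fun x hx => by
    have := scalT_hasDerivAt (A*(-1)*(-1-1)) (-1-1-1) (B*(p-1)*(p-1-1)) (p-1-1-1)
      (C*(-p-1)*(-p-1-1)) (-p-1-1-1) x hx
    convert this using 2 <;> ring
  -- g agrees with h0 on positive reals
  have hgh : ∀ x ∈ Ioi (0:ℝ), g x = h0 x := by
    intro x hx
    have hx0 : (0:ℝ) < x := hx
    have hxne : x ≠ 0 := ne_of_gt hx0
    rw [hg]
    simp only [hh0, scalT]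
    rw [show p - 1 = p + (-1) by ring, show -p - 1 = -p + (-1) by ring,
      Real.rpow_add hx0, Real.rpow_add hx0, Real.rpow_neg_one]
    rw [hA, hB, hC]
    field_simp
    ring
  -- values at 1
  have h1one : h1 1 = 0 := by
    simp only [hh1, scalT, Real.one_rpow, mul_one]
    rw [hA, hB, hC, hp]
    field_simp
    ring
  have h2one : h2 1 = 0 := by
    simp only [hh2, scalT, Real.one_rpow, mul_one]
    rw [hA, hB, hC, hp]
    field_simp
    ring
  have h3one : h3 1 = 2 * N ^ 2 * (N - 1) / (N - 2) ^ 2 := by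
    simp only [hh3, scalT, Real.one_rpow, mul_one]
    rw [hA, hB, hC, hp]
    field_simp
    ring
  have hcpos : 0 < 2 * N ^ 2 * (N - 1) / (N - 2) ^ 2 := by
    apply div_pos <;> nlinarith
  -- derivative chain
  have hder1 : ∀ x ∈ Ioi (0:ℝ), deriv g x = h1 x := by
    intro x hx
    have hev : g =ᶠ[𝓝 x] h0 := eventually_of_mem (isOpen_Ioi.mem_nhds hx) hgh
    rw [hev.deriv_eq, (hD0 x hx).deriv]
  have hder2 : ∀ x ∈ Ioi (0:ℝ), deriv (deriv g) x = h2 x := by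
    intro x hx
    have hev : deriv g =ᶠ[𝓝 x] h1 := eventually_of_mem (isOpen_Ioi.mem_nhds hx) hder1
    rw [hev.deriv_eq, (hD1 x hx).deriv]
  have hder3 : deriv (deriv (deriv g)) 1 = h3 1 := by
    have hev : deriv (deriv g) =ᶠ[𝓝 (1:ℝ)] h2 :=
      eventually_of_mem (isOpen_Ioi.mem_nhds (by norm_num : (1:ℝ) ∈ Ioi 0)) hder2
    rw [hev.deriv_eq, (hD2 1 one_pos).deriv]
  have goal1 : deriv g 1 = 0 := by rw [hder1 1 (mem_Ioi.mpr one_pos), h1one]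
  have goal2 : iteratedDeriv 2 g 1 = 0 := by
    rw [show (2:ℕ) = 1 + 1 from rfl, iteratedDeriv_succ, iteratedDeriv_one,
      hder2 1 (mem_Ioi.mpr one_pos), h2one]
  have goal3 : iteratedDeriv 3 g 1 = 2 * N ^ 2 * (N - 1) / (N - 2) ^ 2 := by
    rw [show (3:ℕ) = 2 + 1 from rfl, iteratedDeriv_succ,
      show (2:ℕ) = 1 + 1 from rfl, iteratedDeriv_succ, iteratedDeriv_one, hder3, h3one]
  -- sign of h2 near 1
  have hslope : ∀ᶠ x in 𝓝[≠] (1:ℝ), 0 < slope h2 1 x := by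
    have hT : Tendsto (slope h2 1) (𝓝[≠] 1) (𝓝 (h3 1)) :=
      hasDerivAt_iff_tendsto_slope.mp (hD2 1 one_pos)
    exact hT.eventually (eventually_gt_nhds (h3one ▸ hcpos))
  rw [eventually_nhdsWithin_iff, Metric.eventually_nhds_iff] at hslope
  obtain ⟨δ, hδpos, hδ⟩ := hslope
  set ε : ℝ := min δ (1/2) / 2 with hε
  have hεpos : 0 < ε := by positivity
  have hεδ : ε < δ := by
    have : min δ (1/2) ≤ δ := min_le_left _ _
    have h2' : 0 < min δ (1/2) := lt_min hδpos (by norm_num)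
    nlinarith
  have hεq : ε ≤ 1/4 := by
    have : min δ (1/2) ≤ 1/2 := min_le_right _ _
    linarith
  have h2pos : ∀ x : ℝ, 1 < x → x < 1 + ε → 0 < h2 x := by
    intro x hx1 hx2
    have hd : dist x 1 < δ := by
      rw [Real.dist_eq, abs_of_pos (by linarith)]; linarith
    have := hδ hd (by simp [Set.mem_compl_iff]; linarith : x ∈ ({1}ᶜ : Set ℝ))
    rw [slope_def_field] at this
    have hx1' : (0:ℝ) < x - 1 := by linarith
    have := mul_pos this hx1'
    rw [div_mul_cancel₀] at this
    · rw [h2one] at this; linarith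
    · exact ne_of_gt hx1'
  have h2neg : ∀ x : ℝ, 1 - ε < x → x < 1 → h2 x < 0 := by
    intro x hx1 hx2
    have hd : dist x 1 < δ := by
      rw [Real.dist_eq, abs_of_neg (by linarith)]; linarith
    have := hδ hd (by simp [Set.mem_compl_iff]; linarith : x ∈ ({1}ᶜ : Set ℝ))
    rw [slope_def_field] at this
    have hx1' : x - 1 < 0 := by linarith
    have := mul_neg_of_pos_of_neg this hx1'
    rw [div_mul_cancel₀] at this
    · rw [h2one] at this; linarith
    · exact ne_of_lt hx1'
  -- h1 monotonicity
  have hIccPosR : ∀ x ∈ Icc (1:ℝ) (1+ε), (0:ℝ) < x := fun x hx => lt_of_lt_of_le one_pos hx.1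
  have hIccPosL : ∀ x ∈ Icc (1-ε) (1:ℝ), (0:ℝ) < x := fun x hx => by
    have := hx.1; linarith
  have h1contR : ContinuousOn h1 (Icc (1:ℝ) (1+ε)) := fun x hx =>
    (hD1 x (hIccPosR x hx)).continuousAt.continuousWithinAt
  have h1contL : ContinuousOn h1 (Icc (1-ε) (1:ℝ)) := fun x hx =>
    (hD1 x (hIccPosL x hx)).continuousAt.continuousWithinAt
  have h1monoR : StrictMonoOn h1 (Icc (1:ℝ) (1+ε)) := by
    apply strictMonoOn_of_deriv_pos (convex_Icc _ _) h1contR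
    intro x hx
    rw [interior_Icc] at hx
    rw [(hD1 x (by linarith [hx.1] : (0:ℝ) < x)).deriv]
    exact h2pos x hx.1 hx.2
  have h1antiL : StrictAntiOn h1 (Icc (1-ε) (1:ℝ)) := by
    apply strictAntiOn_of_deriv_neg (convex_Icc _ _) h1contL
    intro x hx
    rw [interior_Icc] at hx
    rw [(hD1 x (by linarith [hx.1] : (0:ℝ) < x)).deriv]
    exact h2neg x hx.1 hx.2
  have h1posR : ∀ x : ℝ, 1 < x → x ≤ 1 + ε → 0 < h1 x := by
    intro x hx1 hx2
    have := h1monoR (left_mem_Icc.mpr (by linarith)) ⟨le_of_lt hx1, hx2⟩ hx1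
    rwa [h1one] at this
  have h1posL : ∀ x : ℝ, 1 - ε ≤ x → x < 1 → 0 < h1 x := by
    intro x hx1 hx2
    have := h1antiL ⟨hx1, le_of_lt hx2⟩ (right_mem_Icc.mpr (by linarith)) hx2
    rwa [h1one] at this
  -- g monotonicity
  have hgcontR : ContinuousOn g (Icc (1:ℝ) (1+ε)) := by
    apply ContinuousOn.congr (f := h0)
    · exact fun x hx => (hD0 x (hIccPosR x hx)).continuousAt.continuousWithinAt
    · exact fun x hx => hgh x (hIccPosR x hx)
  have hgcontL : ContinuousOn g (Icc (1-ε) (1:ℝ)) := by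
    apply ContinuousOn.congr (f := h0)
    · exact fun x hx => (hD0 x (hIccPosL x hx)).continuousAt.continuousWithinAt
    · exact fun x hx => hgh x (hIccPosL x hx)
  have hgmonoR : StrictMonoOn g (Icc (1:ℝ) (1+ε)) := by
    apply strictMonoOn_of_deriv_pos (convex_Icc _ _) hgcontR
    intro x hx
    rw [interior_Icc] at hx
    rw [hder1 x (by simp only [mem_Ioi]; linarith [hx.1])]
    exact h1posR x hx.1 (le_of_lt hx.2)
  have hgmonoL : StrictMonoOn g (Icc (1-ε) (1:ℝ)) := by
    apply strictMonoOn_of_deriv_pos (convex_Icc _ _) hgcontL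
    intro x hx
    rw [interior_Icc] at hx
    rw [hder1 x (by simp only [mem_Ioi]; linarith [hx.1])]
    exact h1posL x (le_of_lt hx.1) hx.2
  -- not a local max
  have hnotmax : ¬ IsLocalMax g 1 := by
    intro hmax
    rw [IsLocalMax, IsMaxFilter, Metric.eventually_nhds_iff] at hmax
    obtain ⟨r, hrpos, hr⟩ := hmax
    set x : ℝ := 1 + min ε r / 2 with hx
    have hminpos : 0 < min ε r := lt_min hεpos hrpos
    have hx1 : 1 < x := by rw [hx]; linarith
    have hxle : x ≤ 1 + ε := by
      have : min ε r ≤ ε := min_le_left _ _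
      rw [hx]; linarith
    have hgx : g 1 < g x := hgmonoR (left_mem_Icc.mpr (by linarith)) ⟨le_of_lt hx1, hxle⟩ hx1
    have hdx : dist x 1 < r := by
      rw [Real.dist_eq, abs_of_pos (by linarith)]
      have : min ε r ≤ r := min_le_right _ _
      rw [hx]; push_cast; linarith
    exact absurd (hr hdx) (not_le.mpr hgx)
  have hnotmin : ¬ IsLocalMin g 1 := by
    intro hmin
    rw [IsLocalMin, IsMinFilter, Metric.eventually_nhds_iff] at hmin
    obtain ⟨r, hrpos, hr⟩ := hmin
    set x : ℝ := 1 - min ε r / 2 with hx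
    have hminpos : 0 < min ε r := lt_min hεpos hrpos
    have hx1 : x < 1 := by rw [hx]; linarith
    have hxge : 1 - ε ≤ x := by
      have : min ε r ≤ ε := min_le_left _ _
      rw [hx]; linarith
    have hgx : g x < g 1 := hgmonoL ⟨hxge, le_of_lt hx1⟩ (right_mem_Icc.mpr (by linarith)) hx1
    have hdx : dist x 1 < r := by
      rw [Real.dist_eq, abs_of_neg (by linarith)]
      have : min ε r ≤ r := min_le_right _ _
      rw [hx]; linarith
    exact absurd (hr hdx) (not_le.mpr hgx)
  exact ⟨goal1, goal2, goal3, ne_of_gt hcpos, hnotmax, hnotmin⟩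
end

section
/- Fix an integer n ≥ 4. Let h : ℝ² → ℝ be defined on {x > 0, y > 0} by h(x,y) = 2(n−1)/x + (n−1)(n−2)/(2y) − (n−2)y/(2x²), and let V = {(x,y) ∈ ℝ² : x > 0, y > 0, x^{n−1} y^{(n−1)(n−2)/2} = 1}. Then h does not have a local maximum on V at the point (1,1); that is, every neighborhood of (1,1) contains a point (x,y) ∈ V with h(x,y) > h(1,1). -/
open Set

private lemma aux_R_pos (j : ℕ) (s : ℝ) (hs : 1 < s) :
    0 < ((j:ℝ)+1) * s^(j+3) - ((j:ℝ)+3) * s^(j+1) + 2 := by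
  set R : ℝ → ℝ := fun t => ((j:ℝ)+1) * t^(j+3) - ((j:ℝ)+3) * t^(j+1) + 2 with hR
  have hder : ∀ t : ℝ, HasDerivAt R
      (((j:ℝ)+1)*((j:ℝ)+3) * t^j * (t^2 - 1)) t := by
    intro t
    have h1 := hasDerivAt_pow (j+3) t
    have h2 := hasDerivAt_pow (j+1) t
    have := ((h1.const_mul ((j:ℝ)+1)).sub (h2.const_mul ((j:ℝ)+3))).add_const 2
    refine this.congr_deriv ?_
    simp only [show j+3-1 = j+2 from by omega, show j+1-1 = j from by omega]
    push_cast
    ring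
  have mono : StrictMonoOn R (Ici (1:ℝ)) := by
    apply strictMonoOn_of_deriv_pos (convex_Ici 1)
    · apply Continuous.continuousOn; fun_prop
    · intro x hx
      rw [interior_Ici] at hx
      rw [(hder x).deriv]
      have hx1 : (1:ℝ) < x := hx
      have hx0 : (0:ℝ) < x := lt_trans one_pos hx1
      have : (0:ℝ) < x^2 - 1 := by nlinarith
      positivity
  have h0 : R 1 = 0 := by simp [hR]; ring
  have := mono (self_mem_Ici) (le_of_lt hs) hs
  rw [h0] at this
  exact this

private lemma aux_P_pos (j : ℕ) (s : ℝ) (hs : 1 < s) :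
    0 < ((j:ℝ)+2)*((j:ℝ)+1)*s^(2*j+6) - ((j:ℝ)+3)^2*s^(2*j+4)
      + 4*((j:ℝ)+2)*s^(j+3) - ((j:ℝ)+1) := by
  set P : ℝ → ℝ := fun t => ((j:ℝ)+2)*((j:ℝ)+1)*t^(2*j+6) - ((j:ℝ)+3)^2*t^(2*j+4)
      + 4*((j:ℝ)+2)*t^(j+3) - ((j:ℝ)+1) with hP
  have hder : ∀ t : ℝ, HasDerivAt P
      (2*((j:ℝ)+3)*((j:ℝ)+2) * t^(j+2)
        * (((j:ℝ)+1) * t^(j+3) - ((j:ℝ)+3) * t^(j+1) + 2)) t := by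
    intro t
    have h1 := hasDerivAt_pow (2*j+6) t
    have h2 := hasDerivAt_pow (2*j+4) t
    have h3 := hasDerivAt_pow (j+3) t
    have := (((h1.const_mul (((j:ℝ)+2)*((j:ℝ)+1))).sub
      (h2.const_mul (((j:ℝ)+3)^2))).add (h3.const_mul (4*((j:ℝ)+2)))).sub_const ((j:ℝ)+1)
    refine this.congr_deriv ?_
    simp only [show 2*j+6-1 = 2*j+5 from by omega, show 2*j+4-1 = 2*j+3 from by omega,
      show j+3-1 = j+2 from by omega]
    push_cast
    ring
  have mono : StrictMonoOn P (Ici (1:ℝ)) := by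
    apply strictMonoOn_of_deriv_pos (convex_Ici 1)
    · apply Continuous.continuousOn; fun_prop
    · intro x hx
      rw [interior_Ici] at hx
      rw [(hder x).deriv]
      have hx0 : (0:ℝ) < x := lt_trans one_pos hx
      have hR := aux_R_pos j x hx
      positivity
  have h0 : P 1 = 0 := by simp [hP]; ring
  have := mono (self_mem_Ici) (le_of_lt hs) hs
  rw [h0] at this
  exact this

/-- The standard metric on `SO(2n)/Tⁿ`, `n ≥ 4`, is not a local maximum of scalar
curvature among unit-volume invariant metrics: the scalar curvature
`h(x,y) = 2(n−1)/x + (n−1)(n−2)/(2y) − (n−2)y/(2x²)` restricted to the unit-volume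
variety `V = {x > 0, y > 0, x^{n−1} y^{(n−1)(n−2)/2} = 1}` does not have a local
maximum at `(1,1)`. -/
theorem scal_SO2n_not_localMaxOn (n : ℕ) (hn : 4 ≤ n)
    (h : ℝ × ℝ → ℝ)
    (hh : ∀ p : ℝ × ℝ, h p = 2 * ((n : ℝ) - 1) / p.1
      + ((n : ℝ) - 1) * ((n : ℝ) - 2) / (2 * p.2)
      - ((n : ℝ) - 2) * p.2 / (2 * p.1 ^ 2))
    (V : Set (ℝ × ℝ))
    (hV : V = {p : ℝ × ℝ | 0 < p.1 ∧ 0 < p.2 ∧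
      p.1 ^ ((n : ℝ) - 1) * p.2 ^ (((n : ℝ) - 1) * ((n : ℝ) - 2) / 2) = 1}) :
    ∀ U ∈ nhds ((1, 1) : ℝ × ℝ), ∃ p ∈ U, p ∈ V ∧ h (1, 1) < h p := by
  intro U hU
  obtain ⟨j, rfl⟩ : ∃ j : ℕ, n = j + 3 := ⟨n - 3, by omega⟩
  have hnr : ((j + 3 : ℕ) : ℝ) = (j:ℝ) + 3 := by push_cast; ring
  -- the curve
  set c : ℝ → ℝ × ℝ := fun s => (s^(j+1), (s^2)⁻¹) with hc
  have hcont : ContinuousAt c 1 := by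
    apply ContinuousAt.prodMk
    · fun_prop
    · exact ContinuousAt.inv₀ (by fun_prop) (by norm_num)
  have hc1 : c 1 = (1, 1) := by simp [hc]
  have hev : ∀ᶠ s in nhdsWithin (1:ℝ) (Ioi 1), c s ∈ U := by
    apply Filter.Eventually.filter_mono nhdsWithin_le_nhds
    exact hcont (hc1 ▸ hU)
  obtain ⟨s, hsU, hs1⟩ := (hev.and eventually_mem_nhdsWithin).exists
  have hs0 : (0:ℝ) < s := lt_trans one_pos hs1
  have hs0' : s ≠ 0 := ne_of_gt hs0
  refine ⟨c s, hsU, ?_, ?_⟩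
  · rw [hV]
    refine ⟨by positivity, by positivity, ?_⟩
    have e1 : (s^(j+1) : ℝ) = s ^ (((j:ℝ)+1)) := by
      rw [show ((j:ℝ)+1) = ((j+1 : ℕ):ℝ) by push_cast; ring, Real.rpow_natCast]
    have e2 : ((s^2)⁻¹ : ℝ) = s ^ ((-2 : ℝ)) := by
      rw [Real.rpow_neg hs0.le, show ((2:ℝ)) = ((2:ℕ):ℝ) by norm_num, Real.rpow_natCast]
    show (s^(j+1)) ^ (((j+3:ℕ):ℝ) - 1) * ((s^2)⁻¹) ^ ((((j+3:ℕ):ℝ) - 1) * (((j+3:ℕ):ℝ) - 2) / 2) = 1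
    rw [e1, e2, ← Real.rpow_mul hs0.le, ← Real.rpow_mul hs0.le, ← Real.rpow_add hs0]
    rw [show ((j:ℝ)+1) * (((j+3:ℕ):ℝ) - 1) + (-2) * ((((j+3:ℕ):ℝ) - 1) * (((j+3:ℕ):ℝ) - 2) / 2) = 0
      by push_cast; ring, Real.rpow_zero]
  · have hkey : h (c s) - h (1,1) =
        (((j:ℝ)+2)*((j:ℝ)+1)*s^(2*j+6) - ((j:ℝ)+3)^2*s^(2*j+4)
          + 4*((j:ℝ)+2)*s^(j+3) - ((j:ℝ)+1)) / (2*s^(2*j+4)) := by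
      rw [hh, hh]
      simp only [hc, hnr]
      field_simp
      ring
    have hpos := aux_P_pos j s hs1
    have hden : (0:ℝ) < 2*s^(2*j+4) := by positivity
    have : 0 < h (c s) - h (1,1) := by rw [hkey]; positivity
    linarith
end
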